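/- arXiv:1808.06734 — 6 statements merged into one kernel-verified Lean document; each statement's English description precedes it below -/
import Mathlib

section
/- For every integer n ≥ 4, the fully active cop number of the cycle C_n equals 2. -/
open SimpleGraph

universe u v

variable {V : Type u}

/-- A configuration in the game of Cops and Robbers with `n` cops:
the positions of the cops together with the position of the robber. -/
abbrev CRConfig (V : Type u) (n : ℕ) : Type u := (Fin n → V) × V

/-- A strategy for `n` cops in the *fully active* game on `G`:
initial positions, together with a move function (which may depend on the
full history of the play and on the current configuration) under which
every cop moves to an adjacent vertex on every turn. -/
structure ActiveCopStrategy (G : SimpleGraph V) (n : ℕ) where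
  init : Fin n → V
  move : List (CRConfig V n) → CRConfig V n → Fin n → V
  move_adj : ∀ h c i, G.Adj (c.1 i) (move h c i)

/-- A strategy for the robber in the *fully active* game on `G`:
an initial position (chosen knowing the cops' initial positions),
together with a move function (which may depend on the full history and on
the current configuration, whose first component records the cops' newly
chosen positions) under which the robber moves to an adjacent vertex on
every turn. -/
structure ActiveRobberStrategy (G : SimpleGraph V) (n : ℕ) where
  init : (Fin n → V) → V
  move : List (CRConfig V n) → CRConfig V n → V
  move_adj : ∀ h c, G.Adj c.2 (move h c)

/-- A strategy for `n` cops in the *passive* (classical) game on `G`: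
on her turn, each cop either moves to an adjacent vertex or stays put. -/
structure PassiveCopStrategy (G : SimpleGraph V) (n : ℕ) where
  init : Fin n → V
  move : List (CRConfig V n) → CRConfig V n → Fin n → V
  move_adj : ∀ h c i, G.Adj (c.1 i) (move h c i) ∨ move h c i = c.1 i

/-- A strategy for the robber in the *passive* (classical) game on `G`:
on his turn the robber either moves to an adjacent vertex or stays put. -/
structure PassiveRobberStrategy (G : SimpleGraph V) (n : ℕ) where
  init : (Fin n → V) → V
  move : List (CRConfig V n) → CRConfig V n → V
  move_adj : ∀ h c, G.Adj c.2 (move h c) ∨ move h c = c.2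

/-- The play determined by (the data of) a cop strategy and a robber strategy:
`crPlay n cinit rinit cmove rmove t` is the pair consisting of the history of
configurations strictly before round `t` and the configuration after round `t`
(a round consists of a cop move followed by a robber move; round `0` is the
initial placement, cops first, then the robber). -/
def crPlay (n : ℕ) (cinit : Fin n → V) (rinit : (Fin n → V) → V)
    (cmove : List (CRConfig V n) → CRConfig V n → Fin n → V)
    (rmove : List (CRConfig V n) → CRConfig V n → V) :
    ℕ → List (CRConfig V n) × CRConfig V n
  | 0 => ([], (cinit, rinit cinit))
  | t + 1 =>
      let p := crPlay n cinit rinit cmove rmove t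
      let c' := cmove p.1 p.2
      (p.1 ++ [p.2], (c', rmove p.1 (c', p.2.2)))

/-- The cops capture the robber in the given play: at some point of the play
(either right after a robber move, or right after a cop move) some cop
occupies the robber's vertex. -/
def crCaptures (n : ℕ) (cinit : Fin n → V) (rinit : (Fin n → V) → V)
    (cmove : List (CRConfig V n) → CRConfig V n → Fin n → V)
    (rmove : List (CRConfig V n) → CRConfig V n → V) : Prop :=
  ∃ t : ℕ,
    (∃ i, (crPlay n cinit rinit cmove rmove t).2.1 i
        = (crPlay n cinit rinit cmove rmove t).2.2) ∨
    (∃ i, cmove (crPlay n cinit rinit cmove rmove t).1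
            (crPlay n cinit rinit cmove rmove t).2 i
        = (crPlay n cinit rinit cmove rmove t).2.2)

/-- In the fully active game, the given cop strategy captures the robber
playing the given strategy. -/
def ActiveCapture {G : SimpleGraph V} {n : ℕ} (cs : ActiveCopStrategy G n)
    (rs : ActiveRobberStrategy G n) : Prop :=
  crCaptures n cs.init rs.init cs.move rs.move

/-- In the passive game, the given cop strategy captures the robber
playing the given strategy. -/
def PassiveCapture {G : SimpleGraph V} {n : ℕ} (cs : PassiveCopStrategy G n)
    (rs : PassiveRobberStrategy G n) : Prop :=
  crCaptures n cs.init rs.init cs.move rs.move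

/-- `n` cops have a winning strategy in the fully active game on `G`. -/
def ActiveCopsWin (G : SimpleGraph V) (n : ℕ) : Prop :=
  ∃ cs : ActiveCopStrategy G n, ∀ rs : ActiveRobberStrategy G n, ActiveCapture cs rs

/-- `n` cops have a winning strategy in the passive (classical) game on `G`. -/
def PassiveCopsWin (G : SimpleGraph V) (n : ℕ) : Prop :=
  ∃ cs : PassiveCopStrategy G n, ∀ rs : PassiveRobberStrategy G n, PassiveCapture cs rs

/-- The fully active cop number of `G`. -/
noncomputable def acop (G : SimpleGraph V) : ℕ := sInf {n | ActiveCopsWin G n}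

/-- The (classical, passive) cop number of `G`. -/
noncomputable def copNumber (G : SimpleGraph V) : ℕ := sInf {n | PassiveCopsWin G n}

open scoped Fin.CommRing

namespace AcopAux

/-- adjacency to `v+1` in a cycle of length `m+4`. -/
lemma adj_add_one (m : ℕ) (v : Fin (m+4)) : (cycleGraph (m+4)).Adj v (v+1) :=
  (cycleGraph_adj (n := m+2)).mpr (Or.inr (by ring))

lemma adj_sub_one (m : ℕ) (v : Fin (m+4)) : (cycleGraph (m+4)).Adj v (v-1) :=
  (cycleGraph_adj (n := m+2)).mpr (Or.inl (by ring))

lemma adj_cases {m : ℕ} {u v : Fin (m+4)} (h : (cycleGraph (m+4)).Adj u v) :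
    v = u + 1 ∨ v = u - 1 := by
  rcases (cycleGraph_adj (n := m+2)).mp h with h' | h'
  · right; rw [← h']; ring
  · left; rw [← h']; ring

lemma fin_cast_inj {m a b : ℕ} (ha : a < m+4) (hb : b < m+4) :
    ((a : Fin (m+4)) = (b : Fin (m+4))) ↔ a = b := by
  rw [Fin.ext_iff, Fin.val_natCast, Fin.val_natCast,
    Nat.mod_eq_of_lt ha, Nat.mod_eq_of_lt hb]

lemma two_ne_zero' (m : ℕ) : (2 : Fin (m+4)) ≠ 0 := by
  have : ((2:ℕ) : Fin (m+4)) ≠ ((0:ℕ) : Fin (m+4)) := by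
    rw [Ne, fin_cast_inj (by omega) (by omega)]; omega
  simpa using this

lemma one_ne_two' (m : ℕ) : (1 : Fin (m+4)) ≠ 2 := by
  have : ((1:ℕ) : Fin (m+4)) ≠ ((2:ℕ) : Fin (m+4)) := by
    rw [Ne, fin_cast_inj (by omega) (by omega)]; omega
  simpa using this

lemma three_ne_zero' (m : ℕ) : (3 : Fin (m+4)) ≠ 0 := by
  have : ((3:ℕ) : Fin (m+4)) ≠ ((0:ℕ) : Fin (m+4)) := by
    rw [Ne, fin_cast_inj (by omega) (by omega)]; omega
  simpa using this

/-- the key hitting lemma: adding 2 repeatedly hits {0, -1}. -/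
lemma hit (m : ℕ) (c : Fin (m+4)) :
    ∃ k, k < m + 4 ∧ (c + 2*(k : Fin (m+4)) = 0 ∨ c + 2*(k : Fin (m+4)) = -1) := by
  refine ⟨(-c).val / 2, by have := (-c).isLt; omega, ?_⟩
  have hle : (-c).val % 2 ≤ (-c).val := Nat.mod_le _ _
  have h2k : (2 * ((-c).val / 2) : ℕ) = (-c).val - (-c).val % 2 := by omega
  have hcast : (2*(((-c).val / 2 : ℕ) : Fin (m+4)) : Fin (m+4))
      = (((-c).val : ℕ) : Fin (m+4)) - (((-c).val % 2 : ℕ) : Fin (m+4)) := by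
    rw [show (2*(((-c).val / 2 : ℕ) : Fin (m+4)) : Fin (m+4))
        = ((2 * ((-c).val / 2) : ℕ) : Fin (m+4)) by push_cast; ring,
      h2k, Nat.cast_sub hle]
  rw [hcast, Fin.cast_val_eq_self]
  rcases Nat.mod_two_eq_zero_or_one (-c).val with h | h
  · left; rw [h]; push_cast; ring
  · right; rw [h]; push_cast; ring

lemma nat_ivl (f : ℕ → ℕ) (h0 : f 0 = 0) (hstep : ∀ t, f (t+1) ≤ f t + 1)
    (k T : ℕ) (hk : k ≤ f T) : ∃ t, t ≤ T ∧ f t = k := by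
  induction T with
  | zero => exact ⟨0, le_refl _, by omega⟩
  | succ T ih =>
    by_cases h : k ≤ f T
    · obtain ⟨t, ht, hft⟩ := ih h; exact ⟨t, by omega, hft⟩
    · exact ⟨T+1, le_refl _, by have := hstep T; omega⟩

def upCount {α : Type*} [Add α] [One α] [DecidableEq α] (r : ℕ → α) : ℕ → ℕ
  | 0 => 0
  | t + 1 => upCount r t + (if r (t+1) = r t + 1 then 1 else 0)

lemma upCount_le {α : Type*} [Add α] [One α] [DecidableEq α] (r : ℕ → α) (t : ℕ) :
    upCount r t ≤ t := by
  induction t with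
  | zero => simp [upCount]
  | succ t ih => rw [upCount]; split <;> omega

lemma upCount_step {α : Type*} [Add α] [One α] [DecidableEq α] (r : ℕ → α) (t : ℕ) :
    upCount r t ≤ upCount r (t+1) ∧ upCount r (t+1) ≤ upCount r t + 1 := by
  rw [upCount]; split <;> omega

end AcopAux

namespace AcopAux

lemma play_succ {V : Type u} (n : ℕ) (cinit : Fin n → V) (rinit : (Fin n → V) → V)
    (cmove : List (CRConfig V n) → CRConfig V n → Fin n → V)
    (rmove : List (CRConfig V n) → CRConfig V n → V) (t : ℕ) :
    crPlay n cinit rinit cmove rmove (t+1)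
      = ((crPlay n cinit rinit cmove rmove t).1 ++ [(crPlay n cinit rinit cmove rmove t).2],
         (cmove (crPlay n cinit rinit cmove rmove t).1 (crPlay n cinit rinit cmove rmove t).2,
          rmove (crPlay n cinit rinit cmove rmove t).1
            (cmove (crPlay n cinit rinit cmove rmove t).1 (crPlay n cinit rinit cmove rmove t).2,
             (crPlay n cinit rinit cmove rmove t).2.2))) := rfl

lemma zeroCops (m : ℕ) : ¬ ActiveCopsWin (cycleGraph (m+4)) 0 := by
  rintro ⟨cs, h⟩
  obtain ⟨t, ht⟩ := h ⟨fun _ => 0, fun _ c => c.2 + 1, fun _ c => adj_add_one m c.2⟩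
  rcases ht with ⟨i, _⟩ | ⟨i, _⟩ <;> exact i.elim0

def robStrat1 (m : ℕ) : ActiveRobberStrategy (cycleGraph (m+4)) 1 where
  init := fun c => c 0 + 2
  move := fun _ c => if (cycleGraph (m+4)).Adj c.2 (c.1 0 + 2) then c.1 0 + 2 else c.2 + 1
  move_adj := fun h c => by
    split
    · assumption
    · exact adj_add_one m c.2

lemma oneCop (m : ℕ) : ¬ ActiveCopsWin (cycleGraph (m+4)) 1 := by
  rintro ⟨cs, h⟩
  set rs := robStrat1 m with hrs
  set p := crPlay 1 cs.init rs.init cs.move rs.move with hp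
  -- invariant
  have inv : ∀ t, (p t).2.2 = (p t).2.1 0 + 2 := by
    intro t
    induction t with
    | zero => rfl
    | succ t ih =>
      rw [hp, play_succ]
      dsimp only
      rw [← hp]
      set c' := cs.move (p t).1 (p t).2 with hc'
      have hadj : (cycleGraph (m+4)).Adj ((p t).2.1 0) (c' 0) := cs.move_adj _ _ 0
      have hok : (cycleGraph (m+4)).Adj (p t).2.2 (c' 0 + 2) := by
        rcases adj_cases hadj with h1 | h1
        · rw [ih, h1, show (p t).2.1 0 + 1 + 2 = ((p t).2.1 0 + 2) + 1 by ring]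
          exact adj_add_one m _
        · rw [ih, h1, show (p t).2.1 0 - 1 + 2 = ((p t).2.1 0 + 2) - 1 by ring]
          exact adj_sub_one m _
      show rs.move (p t).1 (c', (p t).2.2) = c' 0 + 2
      rw [hrs]
      simp only [robStrat1]
      rw [if_pos hok]
  obtain ⟨t, ht⟩ := h rs
  rcases ht with ⟨i, hi⟩ | ⟨i, hi⟩
  · have hi0 : i = 0 := Subsingleton.elim _ _
    rw [hi0] at hi
    rw [show crPlay 1 cs.init rs.init cs.move rs.move t = p t from rfl, inv t] at hi
    exact two_ne_zero' m (by linear_combination -hi)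
  · have hi0 : i = 0 := Subsingleton.elim _ _
    rw [hi0] at hi
    rw [show crPlay 1 cs.init rs.init cs.move rs.move t = p t from rfl] at hi
    rw [inv t] at hi
    have hadj : (cycleGraph (m+4)).Adj ((p t).2.1 0) (cs.move (p t).1 (p t).2 0) :=
      cs.move_adj _ _ 0
    rcases adj_cases hadj with h1 | h1 <;> rw [h1] at hi
    · exact one_ne_two' m (by linear_combination hi)
    · exact three_ne_zero' m (by linear_combination -hi)

end AcopAux

namespace AcopAux

def copStrat2 (m : ℕ) : ActiveCopStrategy (cycleGraph (m+4)) 2 where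
  init := fun _ => 0
  move := fun _ c i => if i = 0 then c.1 i + 1 else c.1 i - 1
  move_adj := fun h c i => by
    split
    · exact adj_add_one m _
    · exact adj_sub_one m _

lemma twoCopsWin (m : ℕ) : ActiveCopsWin (cycleGraph (m+4)) 2 := by
  refine ⟨copStrat2 m, fun rs => ?_⟩
  by_contra hcap
  unfold ActiveCapture crCaptures at hcap
  push_neg at hcap
  set cs := copStrat2 m with hcs
  set p := crPlay 2 cs.init rs.init cs.move rs.move with hp
  have copinv : ∀ t (i : Fin 2),
      (p t).2.1 i = if i = 0 then ((t:ℕ) : Fin (m+4)) else -((t:ℕ) : Fin (m+4)) := by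
    intro t
    induction t with
    | zero =>
      intro i
      show cs.init i = _
      rw [hcs]
      by_cases hi : i = 0 <;> simp [copStrat2, hi]
    | succ t ih =>
      intro i
      show cs.move (p t).1 (p t).2 i = _
      rw [hcs]
      show (if i = 0 then (p t).2.1 i + 1 else (p t).2.1 i - 1) = _
      rw [ih i]
      by_cases hi : i = 0 <;> simp only [hi, if_pos, if_neg, ite_true, ite_false] <;>
        push_cast <;> ring
  set r : ℕ → Fin (m+4) := fun t => (p t).2.2 with hr
  have rstep : ∀ t, r (t+1) = r t + 1 ∨ r (t+1) = r t - 1 := by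
    intro t
    exact adj_cases (rs.move_adj (p t).1 (cs.move (p t).1 (p t).2, (p t).2.2))
  set u : ℕ → ℕ := upCount r with hu
  have u0 : u 0 = 0 := rfl
  have ule : ∀ t, u t ≤ t := fun t => upCount_le r t
  have ustep : ∀ t, u t ≤ u (t+1) ∧ u (t+1) ≤ u t + 1 := fun t => upCount_step r t
  have hrt : ∀ t, r t = r 0 + 2*((u t : ℕ) : Fin (m+4)) - ((t:ℕ) : Fin (m+4)) := by
    intro t
    induction t with
    | zero => rw [u0]; simp
    | succ t ih =>
      by_cases hc : r (t+1) = r t + 1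
      · have hut : u (t+1) = u t + 1 := by
          show upCount r (t+1) = _
          rw [upCount, if_pos hc]
        rw [hc, ih, hut]; push_cast; ring
      · have h1 : r (t+1) = r t - 1 := (rstep t).resolve_left hc
        have hut : u (t+1) = u t := by
          show upCount r (t+1) = _
          rw [upCount, if_neg hc]
          rfl
        rw [h1, ih, hut]; push_cast; ring
  -- the four no-capture facts
  have hA0 : ∀ t, ((t:ℕ) : Fin (m+4)) ≠ r t := by
    intro t
    have := (hcap t).1 0
    rwa [copinv t 0, if_pos rfl] at this
  have hB0 : ∀ t, -((t:ℕ) : Fin (m+4)) ≠ r t := by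
    intro t
    have := (hcap t).1 1
    rwa [copinv t 1, if_neg (by decide)] at this
  have hA1 : ∀ t, ((t:ℕ) : Fin (m+4)) + 1 ≠ r t := by
    intro t
    have h := (hcap t).2 0
    rw [show cs.move (p t).1 (p t).2 0 = (p t).2.1 0 + 1 from rfl,
      copinv t 0, if_pos rfl] at h
    exact h
  have hB1 : ∀ t, -((t:ℕ) : Fin (m+4)) - 1 ≠ r t := by
    intro t
    have h := (hcap t).2 1
    rw [show cs.move (p t).1 (p t).2 1 = (p t).2.1 1 - 1 from rfl,
      copinv t 1, if_neg (by decide)] at h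
    exact h
  -- endgame
  set T := 2*(m+4) with hT
  have hud : u T ≥ m + 4 ∨ T - u T ≥ m + 4 := by
    have := ule T
    omega
  rcases hud with hcase | hcase
  · obtain ⟨k, hk, hor⟩ := hit m (r 0)
    obtain ⟨t, _, hut⟩ := nat_ivl u u0 (fun t => (ustep t).2) k T (by omega)
    have hk2 : ((u t : ℕ) : Fin (m+4)) = ((k:ℕ) : Fin (m+4)) := by rw [hut]
    rcases hor with hc1 | hc1
    · exact hB0 t (by rw [hrt t, hk2]; linear_combination -hc1)
    · exact hB1 t (by rw [hrt t, hk2]; linear_combination -hc1)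
  · obtain ⟨k, hk, hor⟩ := hit m (-(r 0))
    have d0 : (fun t => t - u t) 0 = 0 := by simp [u0]
    have dstep : ∀ t, (fun t => t - u t) (t+1) ≤ (fun t => t - u t) t + 1 := by
      intro t
      have h1 := (ustep t).1
      have h2 := ule t
      simp only
      omega
    obtain ⟨t, _, hdt⟩ := nat_ivl (fun t => t - u t) d0 dstep k T
      (by show k ≤ T - u T; omega)
    replace hdt : t - u t = k := hdt
    have hk2 : ((k:ℕ) : Fin (m+4)) = ((t:ℕ) : Fin (m+4)) - ((u t : ℕ) : Fin (m+4)) := by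
      rw [← hdt, Nat.cast_sub (ule t)]
    rcases hor with hc1 | hc1
    · exact hA0 t (by rw [hrt t]; linear_combination hc1 - 2*hk2)
    · exact hA1 t (by rw [hrt t]; linear_combination hc1 - 2*hk2)

end AcopAux

/-- For every integer `n ≥ 4`, the fully active cop number of the cycle `C_n`
equals `2`. -/
theorem acop_cycleGraph (n : ℕ) (hn : 4 ≤ n) :
    acop (SimpleGraph.cycleGraph n) = 2 := by
  obtain ⟨m, rfl⟩ : ∃ m, n = m + 4 := ⟨n - 4, by omega⟩
  have h2 := AcopAux.twoCopsWin m
  have h0 := AcopAux.zeroCops m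
  have h1 := AcopAux.oneCop m
  have hmem : sInf {k | ActiveCopsWin (cycleGraph (m+4)) k}
      ∈ {k | ActiveCopsWin (cycleGraph (m+4)) k} := Nat.sInf_mem ⟨2, h2⟩
  have hle : sInf {k | ActiveCopsWin (cycleGraph (m+4)) k} ≤ 2 := Nat.sInf_le h2
  unfold acop
  have htri : sInf {k | ActiveCopsWin (cycleGraph (m+4)) k} = 0 ∨
      sInf {k | ActiveCopsWin (cycleGraph (m+4)) k} = 1 ∨
      sInf {k | ActiveCopsWin (cycleGraph (m+4)) k} = 2 := by omega
  rcases htri with h | h | h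
  · rw [h] at hmem; exact absurd hmem h0
  · rw [h] at hmem; exact absurd hmem h1
  · exact h
end

section
/- For positive integers m and n with m, n ≥ 2, the fully active cop number of the complete bipartite graph K_{m,n} equals 2. -/
open SimpleGraph

universe u v

variable {V : Type u}

section Aux

variable {m n : ℕ}

/-- Adjacency in the complete bipartite graph is: different sides. -/
lemma cbg_adj_iff (x y : Fin m ⊕ Fin n) :
    (completeBipartiteGraph (Fin m) (Fin n)).Adj x y ↔ x.isLeft ≠ y.isLeft := by
  cases x <;> cases y <;> simp

/-- A vertex on the same side as `a`, different from `a`. -/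
def other2 (hm : 2 ≤ m) (a : Fin m) : Fin m :=
  if a = ⟨0, by omega⟩ then ⟨1, by omega⟩ else ⟨0, by omega⟩

lemma other2_ne (hm : 2 ≤ m) (a : Fin m) : other2 hm a ≠ a := by
  unfold other2
  split
  · rename_i h; subst h; exact fun h => by simpa [Fin.ext_iff] using h
  · rename_i h; exact fun h' => h h'.symm

def otherV (hm : 2 ≤ m) (hn : 2 ≤ n) : Fin m ⊕ Fin n → Fin m ⊕ Fin n
  | .inl a => .inl (other2 hm a)
  | .inr b => .inr (other2 hn b)

lemma otherV_isLeft (hm : 2 ≤ m) (hn : 2 ≤ n) (v : Fin m ⊕ Fin n) :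
    (otherV hm hn v).isLeft = v.isLeft := by cases v <;> rfl

lemma otherV_ne (hm : 2 ≤ m) (hn : 2 ≤ n) (v : Fin m ⊕ Fin n) :
    otherV hm hn v ≠ v := by
  cases v with
  | inl a => exact fun h => other2_ne hm a (by injection h)
  | inr b => exact fun h => other2_ne hn b (by injection h)

def flipV (hm : 2 ≤ m) (hn : 2 ≤ n) : Fin m ⊕ Fin n → Fin m ⊕ Fin n
  | .inl _ => .inr ⟨0, by omega⟩
  | .inr _ => .inl ⟨0, by omega⟩

lemma flipV_adj (hm : 2 ≤ m) (hn : 2 ≤ n) (v : Fin m ⊕ Fin n) :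
    (completeBipartiteGraph (Fin m) (Fin n)).Adj v (flipV hm hn v) := by
  cases v <;> simp [flipV]

end Aux

section Main

variable {m n : ℕ}

instance : DecidableRel (completeBipartiteGraph (Fin m) (Fin n)).Adj :=
  fun x y => decidable_of_iff _ (cbg_adj_iff x y).symm

lemma activeCopsWin_two (hm : 2 ≤ m) (hn : 2 ≤ n) :
    ActiveCopsWin (completeBipartiteGraph (Fin m) (Fin n)) 2 := by
  refine ⟨⟨fun i => if i = 0 then .inl ⟨0, by omega⟩ else .inr ⟨0, by omega⟩,
    fun h c i => if (completeBipartiteGraph (Fin m) (Fin n)).Adj (c.1 i) c.2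
      then c.2 else flipV hm hn (c.1 i),
    fun h c i => by split
                    · assumption
                    · exact flipV_adj hm hn _⟩, ?_⟩
  intro rs
  refine ⟨0, Or.inr ?_⟩
  simp only [crPlay]
  set cinit : Fin 2 → Fin m ⊕ Fin n :=
    fun i => if i = 0 then .inl ⟨0, by omega⟩ else .inr ⟨0, by omega⟩ with hcinit
  set r := rs.init cinit with hr
  cases hrc : r with
  | inl a =>
    refine ⟨1, ?_⟩
    have hadj : (completeBipartiteGraph (Fin m) (Fin n)).Adj (cinit 1) r := by
      rw [hrc]; simp [hcinit]
    exact if_pos hadj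
  | inr b =>
    refine ⟨0, ?_⟩
    have hadj : (completeBipartiteGraph (Fin m) (Fin n)).Adj (cinit 0) r := by
      rw [hrc]; simp [hcinit]
    exact if_pos hadj

lemma not_activeCopsWin_zero (hm : 2 ≤ m) (hn : 2 ≤ n) :
    ¬ ActiveCopsWin (completeBipartiteGraph (Fin m) (Fin n)) 0 := by
  rintro ⟨cs, h⟩
  have := h ⟨fun _ => .inl ⟨0, by omega⟩, fun _ c => flipV hm hn c.2,
    fun _ c => flipV_adj hm hn _⟩
  obtain ⟨t, h1 | h2⟩ := this
  · exact (Fin.elim0 h1.choose)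
  · exact (Fin.elim0 h2.choose)

lemma not_activeCopsWin_one (hm : 2 ≤ m) (hn : 2 ≤ n) :
    ¬ ActiveCopsWin (completeBipartiteGraph (Fin m) (Fin n)) 1 := by
  rintro ⟨cs, h⟩
  set rs : ActiveRobberStrategy (completeBipartiteGraph (Fin m) (Fin n)) 1 :=
    ⟨fun cinit => otherV hm hn (cinit 0),
     fun h c => if (completeBipartiteGraph (Fin m) (Fin n)).Adj c.2 (otherV hm hn (c.1 0))
                then otherV hm hn (c.1 0) else flipV hm hn c.2,
     fun h c => by split
                   · assumption
                   · exact flipV_adj hm hn _⟩ with hrs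
  obtain ⟨t, hcap⟩ := h rs
  have inv : ∀ t, ((crPlay 1 cs.init rs.init cs.move rs.move t).2.1 0).isLeft
      = ((crPlay 1 cs.init rs.init cs.move rs.move t).2.2).isLeft ∧
      (crPlay 1 cs.init rs.init cs.move rs.move t).2.1 0
      ≠ (crPlay 1 cs.init rs.init cs.move rs.move t).2.2 := by
    intro t
    induction t with
    | zero =>
      simp only [crPlay, hrs]
      exact ⟨(otherV_isLeft hm hn _).symm, fun h => (otherV_ne hm hn _) h.symm⟩
    | succ t ih =>
      set p := crPlay 1 cs.init rs.init cs.move rs.move t with hp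
      have hcopadj : (completeBipartiteGraph (Fin m) (Fin n)).Adj (p.2.1 0)
          (cs.move p.1 p.2 0) := cs.move_adj _ _ _
      set c' := cs.move p.1 p.2 with hc'
      have hside : (c' 0).isLeft ≠ (p.2.2).isLeft := by
        rw [← ih.1]
        exact fun e => (cbg_adj_iff _ _).mp hcopadj e.symm
      have hradj : (completeBipartiteGraph (Fin m) (Fin n)).Adj p.2.2
          (otherV hm hn (c' 0)) := by
        rw [cbg_adj_iff, otherV_isLeft]
        exact fun e => hside e.symm
      simp only [crPlay, ← hp, ← hc']
      simp only [hrs]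
      rw [if_pos hradj]
      exact ⟨(otherV_isLeft hm hn _).symm, fun e => otherV_ne hm hn _ e.symm⟩
  rcases hcap with ⟨i, hi⟩ | ⟨i, hi⟩
  · exact (inv t).2 (by rw [Fin.eq_zero i] at hi; exact hi)
  · set p := crPlay 1 cs.init rs.init cs.move rs.move t with hp
    have hadj : (completeBipartiteGraph (Fin m) (Fin n)).Adj (p.2.1 0)
        (cs.move p.1 p.2 0) := cs.move_adj _ _ _
    have : (cs.move p.1 p.2 0).isLeft ≠ (p.2.2).isLeft := by
      rw [← (inv t).1]
      exact fun e => (cbg_adj_iff _ _).mp hadj e.symm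
    rw [Fin.eq_zero i] at hi
    exact this (by rw [hi])

end Main

/-- For `m, n ≥ 2`, the fully active cop number of the complete bipartite graph
`K_{m,n}` equals `2`. -/
theorem acop_completeBipartiteGraph (m n : ℕ) (hm : 2 ≤ m) (hn : 2 ≤ n) :
    acop (completeBipartiteGraph (Fin m) (Fin n)) = 2 := by
  have h2 : ActiveCopsWin (completeBipartiteGraph (Fin m) (Fin n)) 2 :=
    activeCopsWin_two hm hn
  refine le_antisymm (Nat.sInf_le h2) (le_csInf ⟨2, h2⟩ ?_)
  intro k hk
  by_contra hlt
  interval_cases k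
  · exact not_activeCopsWin_zero hm hn hk
  · exact not_activeCopsWin_one hm hn hk
end

section
/- Let G be the graph with vertex set {v} ∪ A ∪ B, where v, A, B are pairwise disjoint, |A| ≥ 2, |B| ≥ 2, v is adjacent to all vertices of A, every vertex of A is adjacent to every vertex of B, B induces a clique, and there are no other edges. Then acop(G) = 1 and cop(G) = 2. -/
open SimpleGraph

universe u v

variable {V : Type u}

/-- Let `G` be the graph on `{v} ∪ A ∪ B` (with `v`, `A`, `B` pairwise
disjoint, `|A| ≥ 2`, `|B| ≥ 2`) in which `v` is adjacent to all of `A`, every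
vertex of `A` is adjacent to every vertex of `B`, `B` is a clique, and there
are no other edges.  Then `acop(G) = 1` and `cop(G) = 2`. -/
theorem acop_eq_one_copNumber_eq_two {V : Type u} [Fintype V]
    (G : SimpleGraph V) (v : V) (A B : Set V)
    (hvA : v ∉ A) (hvB : v ∉ B) (hAB : Disjoint A B)
    (hcover : ∀ x : V, x = v ∨ x ∈ A ∨ x ∈ B)
    (hA2 : 2 ≤ A.ncard) (hB2 : 2 ≤ B.ncard)
    (hadj : ∀ x y : V, G.Adj x y ↔
      (x = v ∧ y ∈ A) ∨ (y = v ∧ x ∈ A) ∨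
      (x ∈ A ∧ y ∈ B) ∨ (x ∈ B ∧ y ∈ A) ∨
      (x ∈ B ∧ y ∈ B ∧ x ≠ y)) :
    acop G = 1 ∧ copNumber G = 2 := by
  classical
  obtain ⟨a1, ha1, a2, ha2, ha12⟩ : ∃ a1 ∈ A, ∃ a2 ∈ A, a1 ≠ a2 :=
    (Set.one_lt_ncard A.toFinite).mp (by omega)
  obtain ⟨b1, hb1, b2, hb2, hb12⟩ : ∃ b1 ∈ B, ∃ b2 ∈ B, b1 ≠ b2 :=
    (Set.one_lt_ncard B.toFinite).mp (by omega)
  -- basic membership facts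
  have hAv' : ∀ a ∈ A, a ≠ v := fun a ha h => hvA (h ▸ ha)
  have hBv' : ∀ b ∈ B, b ≠ v := fun b hb h => hvB (h ▸ hb)
  have hAnB : ∀ a ∈ A, a ∉ B := fun a ha => Set.disjoint_left.mp hAB ha
  have hBnA : ∀ b ∈ B, b ∉ A := fun b hb => Set.disjoint_right.mp hAB hb
  -- adjacency facts
  have hAv : ∀ a ∈ A, G.Adj v a := fun a ha => (hadj v a).mpr (Or.inl ⟨rfl, ha⟩)
  have hABadj : ∀ a ∈ A, ∀ b ∈ B, G.Adj a b := fun a ha b hb =>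
    (hadj a b).mpr (Or.inr (Or.inr (Or.inl ⟨ha, hb⟩)))
  have hBAadj : ∀ b ∈ B, ∀ a ∈ A, G.Adj b a := fun b hb a ha =>
    (hadj b a).mpr (Or.inr (Or.inr (Or.inr (Or.inl ⟨hb, ha⟩))))
  have hBBadj : ∀ b ∈ B, ∀ b' ∈ B, b ≠ b' → G.Adj b b' := fun b hb b' hb' h =>
    (hadj b b').mpr (Or.inr (Or.inr (Or.inr (Or.inr ⟨hb, hb', h⟩))))
  have hnAA : ∀ a ∈ A, ∀ a' ∈ A, ¬ G.Adj a a' := by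
    intro a ha a' ha' h
    rcases (hadj a a').mp h with ⟨h1, _⟩ | ⟨h1, _⟩ | ⟨_, h2⟩ | ⟨h1, _⟩ | ⟨h1, _⟩
    · exact hAv' a ha h1
    · exact hAv' a' ha' h1
    · exact hAnB a' ha' h2
    · exact hAnB a ha h1
    · exact hAnB a ha h1
  have hnvB : ∀ b ∈ B, ¬ G.Adj v b := by
    intro b hb h
    rcases (hadj v b).mp h with ⟨_, h2⟩ | ⟨h1, _⟩ | ⟨h1, _⟩ | ⟨h1, _⟩ | ⟨h1, _⟩
    · exact hBnA b hb h2
    · exact hBv' b hb h1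
    · exact hvA h1
    · exact hvB h1
    · exact hvB h1
  have hnBv : ∀ b ∈ B, ¬ G.Adj b v := fun b hb h => hnvB b hb h.symm
  have hvAdjA : ∀ x, G.Adj v x → x ∈ A := by
    intro x h
    rcases (hadj v x).mp h with ⟨_, h2⟩ | ⟨_, h2⟩ | ⟨h1, _⟩ | ⟨h1, _⟩ | ⟨h1, _⟩
    · exact h2
    · exact absurd h2 hvA
    · exact absurd h1 hvA
    · exact absurd h1 hvB
    · exact absurd h1 hvB
  -- a "pick" of an element of A different from any given vertex
  have hpickA : ∀ c : V, (if c = a1 then a2 else a1) ∈ A ∧ (if c = a1 then a2 else a1) ≠ c := by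
    intro c
    by_cases h : c = a1
    · subst h; simp [ha2, Ne.symm ha12]
    · simp [h, ha1, Ne.symm h]
  constructor
  · -- acop G = 1
    have h1 : ActiveCopsWin G 1 := by
      refine ⟨⟨fun _ => b1, fun _ c i => if G.Adj (c.1 i) c.2 then c.2
          else (if c.1 i = v then a1 else if c.1 i = b1 then b2 else b1), ?_⟩, ?_⟩
      · intro h c i
        by_cases had : G.Adj (c.1 i) c.2
        · simp [had]
        · simp only [had, if_false]
          by_cases hcv : c.1 i = v
          · simpa [hcv] using hAv a1 ha1
          · by_cases hcb : c.1 i = b1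
            · simpa [hcv, hcb, hBv' b1 hb1] using hBBadj b1 hb1 b2 hb2 hb12
            · simp only [hcv, hcb, if_false]
              rcases hcover (c.1 i) with h' | h' | h'
              · exact absurd h' hcv
              · exact hABadj _ h' b1 hb1
              · exact hBBadj _ h' b1 hb1 hcb
      · intro rs
        set r0 := rs.init (fun _ => b1) with hr0
        by_cases he : r0 = b1
        · exact ⟨0, Or.inl ⟨0, by simpa [crPlay] using he.symm⟩⟩
        · by_cases had : G.Adj b1 r0
          · exact ⟨0, Or.inr ⟨0, by simp [crPlay, ← hr0, had]⟩⟩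
          · -- r0 must be v
            have hr0v : r0 = v := by
              rcases hcover r0 with h' | h' | h'
              · exact h'
              · exact absurd (hBAadj b1 hb1 r0 h') had
              · exact absurd (hBBadj b1 hb1 r0 h' (Ne.symm he)) had
            refine ⟨1, Or.inr ⟨0, ?_⟩⟩
            have hnb1v : ¬ G.Adj b1 v := hnBv b1 hb1
            simp only [crPlay, ← hr0, hr0v]
            simp only [hnb1v, if_false, if_neg (hBv' b1 hb1), if_pos rfl]
            set r1 := rs.move [] ((fun _ => b2), v) with hr1
            have hr1A : r1 ∈ A := hvAdjA r1 (by simpa using rs.move_adj [] ((fun _ => b2), v))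
            have hadj2 : G.Adj b2 (rs.move [] ((fun _ => b2), v)) := hBAadj b2 hb2 r1 hr1A
            simp [hadj2]
    have h0 : ¬ ActiveCopsWin G 0 := by
      rintro ⟨cs, hcs⟩
      have rs : ActiveRobberStrategy G 0 := by
        refine ⟨fun _ => v, fun _ c => if c.2 ∈ A then v else a1, ?_⟩
        intro h c
        by_cases hc : c.2 ∈ A
        · simpa [hc] using (hAv c.2 hc).symm
        · simp only [hc, if_false]
          rcases hcover c.2 with h' | h' | h'
          · exact h' ▸ hAv a1 ha1
          · exact absurd h' hc
          · exact hBAadj _ h' a1 ha1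
      obtain ⟨t, h⟩ := hcs rs
      rcases h with ⟨i, _⟩ | ⟨i, _⟩ <;> exact i.elim0
    have hne : {n | ActiveCopsWin G n}.Nonempty := ⟨1, h1⟩
    have hn0 : sInf {n | ActiveCopsWin G n} ≠ 0 := by
      intro h
      rcases Nat.sInf_eq_zero.mp h with h' | h'
      · exact h0 h'
      · exact absurd h' (Set.nonempty_iff_ne_empty.mp hne)
    have hle : sInf {n | ActiveCopsWin G n} ≤ 1 := Nat.sInf_le h1
    unfold acop
    omega
  · -- copNumber G = 2
    have h2 : PassiveCopsWin G 2 := by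
      refine ⟨⟨fun i => if i = 0 then v else b1,
          fun _ c i => if G.Adj (c.1 i) c.2 then c.2 else c.1 i, ?_⟩, ?_⟩
      · intro h c i
        by_cases had : G.Adj (c.1 i) c.2
        · simp [had]
        · simp [had]
      · intro rs
        set r0 := rs.init (fun i => if i = 0 then v else b1) with hr0
        rcases hcover r0 with h' | h' | h'
        · exact ⟨0, Or.inl ⟨0, by simp [crPlay, ← hr0, h']⟩⟩
        · exact ⟨0, Or.inr ⟨1, by simp [crPlay, ← hr0, hBAadj b1 hb1 r0 h']⟩⟩
        · by_cases he : r0 = b1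
          · exact ⟨0, Or.inl ⟨1, by simp [crPlay, ← hr0, he]⟩⟩
          · exact ⟨0, Or.inr ⟨1, by
              simp [crPlay, ← hr0, hBBadj b1 hb1 r0 h' (Ne.symm he)]⟩⟩
    have h1n : ¬ PassiveCopsWin G 1 := by
      rintro ⟨cs, hcs⟩
      set pick : V → V := fun c => if c = a1 then a2 else a1 with hpickdef
      have hpick : ∀ c, pick c ∈ A ∧ pick c ≠ c := by
        intro c
        simp only [hpickdef]
        exact hpickA c
      set rmove' : V → V → V := fun c r =>
        if r = v then (if c ∈ A then pick c else v)
        else if r ∈ A then (if c = v then b1 else if c ∈ B then v else r)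
        else (if c ∈ A then pick c else r) with hrmove
      set rinit' : V → V := fun c => if c = v then b1 else if c ∈ A then pick c else v
        with hrinit
      have hmove_adj : ∀ (h : List (CRConfig V 1)) (c : CRConfig V 1),
          G.Adj c.2 (rmove' (c.1 0) c.2) ∨ rmove' (c.1 0) c.2 = c.2 := by
        intro h c
        by_cases hrv : c.2 = v
        · by_cases hcA : c.1 0 ∈ A
          · left
            have e : rmove' (c.1 0) c.2 = pick (c.1 0) := by simp [hrmove, hrv, hcA]
            rw [e, hrv]
            exact hAv _ (hpick _).1
          · right
            have e : rmove' (c.1 0) c.2 = v := by simp [hrmove, hrv, hcA]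
            rw [e, hrv]
        · by_cases hrA : c.2 ∈ A
          · by_cases hcv : c.1 0 = v
            · left
              have e : rmove' (c.1 0) c.2 = b1 := by simp [hrmove, hrv, hrA, hcv]
              rw [e]; exact hABadj _ hrA b1 hb1
            · by_cases hcB : c.1 0 ∈ B
              · left
                have e : rmove' (c.1 0) c.2 = v := by simp [hrmove, hrv, hrA, hcv, hcB]
                rw [e]; exact (hAv _ hrA).symm
              · right
                simp [hrmove, hrv, hrA, hcv, hcB]
          · by_cases hcA : c.1 0 ∈ A
            · left
              have hrB : c.2 ∈ B := by
                rcases hcover c.2 with h' | h' | h'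
                · exact absurd h' hrv
                · exact absurd h' hrA
                · exact h'
              have e : rmove' (c.1 0) c.2 = pick (c.1 0) := by simp [hrmove, hrv, hrA, hcA]
              rw [e]; exact hBAadj _ hrB _ (hpick _).1
            · right
              simp [hrmove, hrv, hrA, hcA]
      let rs : PassiveRobberStrategy G 1 :=
        ⟨fun c => rinit' (c 0), fun _ c => rmove' (c.1 0) c.2, hmove_adj⟩
      -- the invariant at the start
      have hinit : ∀ c : V, rinit' c ≠ c ∧ ¬ G.Adj c (rinit' c) ∧ (rinit' c ∈ B → c = v) := by
        intro c
        by_cases hcv : c = v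
        · have e : rinit' c = b1 := by simp [hrinit, hcv]
          rw [e, hcv]
          exact ⟨hBv' b1 hb1, hnvB b1 hb1, fun _ => rfl⟩
        · by_cases hcA : c ∈ A
          · have e : rinit' c = pick c := by simp [hrinit, hcv, hcA]
            rw [e]
            exact ⟨(hpick c).2, hnAA c hcA _ (hpick c).1, fun h => absurd h (hAnB _ (hpick c).1)⟩
          · have hcB : c ∈ B := by
              rcases hcover c with h' | h' | h'
              · exact absurd h' hcv
              · exact absurd h' hcA
              · exact h'
            have e : rinit' c = v := by simp [hrinit, hcv, hcA]
            rw [e]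
            exact ⟨Ne.symm (hBv' c hcB), hnBv c hcB, fun h => absurd h hvB⟩
      -- the invariant is preserved by any legal cop move
      have hstep : ∀ c c' r, (r ≠ c ∧ ¬ G.Adj c r ∧ (r ∈ B → c = v)) →
          (G.Adj c c' ∨ c' = c) →
          (rmove' c' r ≠ c' ∧ ¬ G.Adj c' (rmove' c' r) ∧ (rmove' c' r ∈ B → c' = v)) := by
        intro c c' r hIcr hleg
        obtain ⟨hne, hnadj, hBc⟩ := hIcr
        have hc'r : c' ≠ r := by
          rcases hleg with h | h
          · intro he; exact hnadj (he ▸ h)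
          · exact h ▸ Ne.symm hne
        by_cases hrv : r = v
        · by_cases hcA : c' ∈ A
          · have e : rmove' c' r = pick c' := by simp [hrmove, hrv, hcA]
            rw [e]
            exact ⟨(hpick c').2, hnAA c' hcA _ (hpick c').1, fun h => absurd h (hAnB _ (hpick c').1)⟩
          · have hc'v : c' ≠ v := hrv ▸ hc'r
            have hcB : c' ∈ B := by
              rcases hcover c' with h' | h' | h'
              · exact absurd h' hc'v
              · exact absurd h' hcA
              · exact h'
            have e : rmove' c' r = v := by simp [hrmove, hrv, hcA]
            rw [e]
            exact ⟨Ne.symm (hBv' c' hcB), hnBv c' hcB, fun h => absurd h hvB⟩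
        · by_cases hrA : r ∈ A
          · by_cases hcv : c' = v
            · have e : rmove' c' r = b1 := by simp [hrmove, hrv, hrA, hcv]
              rw [e, hcv]
              exact ⟨hBv' b1 hb1, hnvB b1 hb1, fun _ => rfl⟩
            · by_cases hcB : c' ∈ B
              · have e : rmove' c' r = v := by simp [hrmove, hrv, hrA, hcv, hcB]
                rw [e]
                exact ⟨Ne.symm (hBv' c' hcB), hnBv c' hcB, fun h => absurd h hvB⟩
              · have hcA : c' ∈ A := by
                  rcases hcover c' with h' | h' | h'
                  · exact absurd h' hcv
                  · exact h'
                  · exact absurd h' hcB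
                have e : rmove' c' r = r := by simp [hrmove, hrv, hrA, hcv, hcB]
                rw [e]
                exact ⟨Ne.symm hc'r, hnAA c' hcA r hrA, fun h => absurd h (hAnB r hrA)⟩
          · have hrB : r ∈ B := by
              rcases hcover r with h' | h' | h'
              · exact absurd h' hrv
              · exact absurd h' hrA
              · exact h'
            have hcv : c = v := hBc hrB
            by_cases hcA : c' ∈ A
            · have e : rmove' c' r = pick c' := by simp [hrmove, hrv, hrA, hcA]
              rw [e]
              exact ⟨(hpick c').2, hnAA c' hcA _ (hpick c').1, fun h => absurd h (hAnB _ (hpick c').1)⟩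
            · have hc'v : c' = v := by
                rcases hleg with h | h
                · exact absurd (hvAdjA c' (hcv ▸ h)) hcA
                · exact h.trans hcv
              have e : rmove' c' r = r := by simp [hrmove, hrv, hrA, hcA]
              rw [e, hc'v]
              exact ⟨hBv' r hrB, hnvB r hrB, fun _ => rfl⟩
      -- the invariant holds throughout the play
      have hind : ∀ t,
          (crPlay 1 cs.init rs.init cs.move rs.move t).2.2
              ≠ (crPlay 1 cs.init rs.init cs.move rs.move t).2.1 0 ∧
          ¬ G.Adj ((crPlay 1 cs.init rs.init cs.move rs.move t).2.1 0)
              ((crPlay 1 cs.init rs.init cs.move rs.move t).2.2) ∧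
          ((crPlay 1 cs.init rs.init cs.move rs.move t).2.2 ∈ B →
              (crPlay 1 cs.init rs.init cs.move rs.move t).2.1 0 = v) := by
        intro t
        induction t with
        | zero => exact hinit (cs.init 0)
        | succ t ih =>
          exact hstep _ _ _ ih
            (cs.move_adj (crPlay 1 cs.init rs.init cs.move rs.move t).1
              (crPlay 1 cs.init rs.init cs.move rs.move t).2 0)
      obtain ⟨t, hcap⟩ := hcs rs
      rcases hcap with ⟨i, h⟩ | ⟨i, h⟩
      · have hi : i = 0 := Subsingleton.elim i 0
        exact (hind t).1 ((hi ▸ h).symm)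
      · have hi : i = 0 := Subsingleton.elim i 0
        subst hi
        obtain ⟨hne, hnadj, _⟩ := hind t
        rcases cs.move_adj (crPlay 1 cs.init rs.init cs.move rs.move t).1
            (crPlay 1 cs.init rs.init cs.move rs.move t).2 0 with hl | hl
        · exact hnadj (h ▸ hl)
        · exact hne ((hl.symm.trans h).symm)
    have h0n : ¬ PassiveCopsWin G 0 := by
      rintro ⟨cs, hcs⟩
      have rs : PassiveRobberStrategy G 0 :=
        ⟨fun _ => v, fun _ c => c.2, fun _ _ => Or.inr rfl⟩
      obtain ⟨t, h⟩ := hcs rs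
      rcases h with ⟨i, _⟩ | ⟨i, _⟩ <;> exact i.elim0
    have hne : {n | PassiveCopsWin G n}.Nonempty := ⟨2, h2⟩
    have hmem : sInf {n | PassiveCopsWin G n} ∈ {n | PassiveCopsWin G n} := Nat.sInf_mem hne
    have hle : sInf {n | PassiveCopsWin G n} ≤ 2 := Nat.sInf_le h2
    have h0 : sInf {n | PassiveCopsWin G n} ≠ 0 := fun h => h0n (h ▸ hmem)
    have hh1 : sInf {n | PassiveCopsWin G n} ≠ 1 := fun h => h1n (h ▸ hmem)
    unfold copNumber
    omega
end

section
/- For every finite connected graph G, acop(G) ≤ 2·cop(G). -/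
open SimpleGraph

universe u v

variable {V : Type u}

namespace AcopAux

open scoped Classical

variable {V : Type u}

/-! ### Generic lemmas about `crPlay` -/

lemma crPlay_hist_eq {m : ℕ} (ci : Fin m → V) (ri : (Fin m → V) → V)
    (cm : List (CRConfig V m) → CRConfig V m → Fin m → V)
    (rm : List (CRConfig V m) → CRConfig V m → V) (t : ℕ) :
    (crPlay m ci ri cm rm t).1
      = (List.range t).map (fun s => (crPlay m ci ri cm rm s).2) := by
  induction t with
  | zero => rfl
  | succ t ih =>
      show (crPlay m ci ri cm rm t).1 ++ [(crPlay m ci ri cm rm t).2] = _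
      rw [ih, List.range_succ, List.map_append, List.map_singleton]

lemma crPlay_length {m : ℕ} (ci : Fin m → V) (ri : (Fin m → V) → V)
    (cm : List (CRConfig V m) → CRConfig V m → Fin m → V)
    (rm : List (CRConfig V m) → CRConfig V m → V) (t : ℕ) :
    (crPlay m ci ri cm rm t).1.length = t := by
  rw [crPlay_hist_eq]; simp

lemma crPlay_getD {m : ℕ} (ci : Fin m → V) (ri : (Fin m → V) → V)
    (cm : List (CRConfig V m) → CRConfig V m → Fin m → V)
    (rm : List (CRConfig V m) → CRConfig V m → V) {t s : ℕ} (hs : s < t) (d : V) :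
    ((crPlay m ci ri cm rm t).1.map Prod.snd).getD s d
      = (crPlay m ci ri cm rm s).2.2 := by
  rw [crPlay_hist_eq, List.map_map,
    List.getD_eq_getElem _ _ (by simpa using hs)]
  simp

lemma crPlay_getD_ge {m : ℕ} (ci : Fin m → V) (ri : (Fin m → V) → V)
    (cm : List (CRConfig V m) → CRConfig V m → Fin m → V)
    (rm : List (CRConfig V m) → CRConfig V m → V) {t s : ℕ} (hs : t ≤ s) (d : V) :
    ((crPlay m ci ri cm rm t).1.map Prod.snd).getD s d = d := by
  apply List.getD_eq_default
  rw [List.length_map, crPlay_length]; exact hs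

/-! ### The simulated passive play, driven by an external robber sequence -/

variable {G : SimpleGraph V} {n : ℕ}

/-- The passive play when the robber's positions are given externally. -/
def psim (cs : PassiveCopStrategy G n) (r : ℕ → V) :
    ℕ → List (CRConfig V n) × CRConfig V n
  | 0 => ([], (cs.init, r 0))
  | t + 1 =>
      let p := psim cs r t
      (p.1 ++ [p.2], (cs.move p.1 p.2, r (t + 1)))

lemma psim_snd (cs : PassiveCopStrategy G n) (r : ℕ → V) (t : ℕ) :
    (psim cs r t).2.2 = r t := by cases t <;> rfl

lemma psim_len (cs : PassiveCopStrategy G n) (r : ℕ → V) (t : ℕ) :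
    (psim cs r t).1.length = t := by
  induction t with
  | zero => rfl
  | succ t ih => show ((psim cs r t).1 ++ [(psim cs r t).2]).length = t + 1; simp [ih]

lemma psim_congr (cs : PassiveCopStrategy G n) {r r' : ℕ → V} {t : ℕ}
    (h : ∀ s ≤ t, r s = r' s) : psim cs r t = psim cs r' t := by
  induction t with
  | zero => show ([], (cs.init, r 0)) = ([], (cs.init, r' 0)); rw [h 0 le_rfl]
  | succ t ih =>
      have h1 : psim cs r t = psim cs r' t := ih fun s hs => h s (hs.trans (Nat.le_succ t))
      show ((psim cs r t).1 ++ [(psim cs r t).2],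
          (cs.move (psim cs r t).1 (psim cs r t).2, r (t+1))) = _
      rw [h1, h (t+1) le_rfl]
      rfl

/-- One step of the two-cop pair simulating a passive cop; the state is
`(virtual position, companion position, whether cop₁ is at the virtual position)`. -/
noncomputable def pairStep (s : V × V × Bool) (p' : V) : V × V × Bool :=
  if p' = s.1 then (s.1, s.2.1, !s.2.2) else (p', s.1, s.2.2)

/-- The pair states of all `n` simulated cops along a play. -/
noncomputable def sigma' (cs : PassiveCopStrategy G n) (nb : V → V) (r : ℕ → V) :
    ℕ → Fin n → V × V × Bool
  | 0 => fun i => (cs.init i, nb (cs.init i), true)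
  | t + 1 => fun i =>
      pairStep (sigma' cs nb r t i) (cs.move (psim cs r t).1 (psim cs r t).2 i)

def cop1 (s : V × V × Bool) : V := if s.2.2 then s.1 else s.2.1
def cop2 (s : V × V × Bool) : V := if s.2.2 then s.2.1 else s.1

lemma cop12 (s : V × V × Bool) : cop1 s = s.1 ∨ cop2 s = s.1 := by
  rcases s with ⟨p, q, b⟩
  cases b <;> simp [cop1, cop2]

/-- Actual positions of the `2*n` active cops. -/
noncomputable def apos (cs : PassiveCopStrategy G n) (nb : V → V) (r : ℕ → V) (t : ℕ)
    (j : Fin (2 * n)) : V :=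
  if h : (j : ℕ) < n then cop1 (sigma' cs nb r t ⟨j, h⟩)
  else cop2 (sigma' cs nb r t ⟨(j : ℕ) - n, by have := j.isLt; omega⟩)

lemma sigma'_congr (cs : PassiveCopStrategy G n) (nb : V → V) {r r' : ℕ → V} {t : ℕ}
    (h : ∀ s < t, r s = r' s) : sigma' cs nb r t = sigma' cs nb r' t := by
  induction t with
  | zero => rfl
  | succ t ih =>
      have h1 : sigma' cs nb r t = sigma' cs nb r' t := ih fun s hs => h s (hs.trans (Nat.lt_succ_self t))
      have h2 : psim cs r t = psim cs r' t := psim_congr cs fun s hs => h s (Nat.lt_succ_of_le hs)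
      funext i
      show pairStep (sigma' cs nb r t i) _ = pairStep (sigma' cs nb r' t i) _
      rw [h1, h2]

lemma apos_congr (cs : PassiveCopStrategy G n) (nb : V → V) {r r' : ℕ → V} {t : ℕ}
    (h : ∀ s < t, r s = r' s) : apos cs nb r t = apos cs nb r' t := by
  funext j
  unfold apos
  rw [sigma'_congr cs nb h]

lemma sigma'_inv (cs : PassiveCopStrategy G n) (nb : V → V)
    (hnb : ∀ v, G.Adj v (nb v)) (r : ℕ → V) :
    ∀ t i, (sigma' cs nb r t i).1 = (psim cs r t).2.1 i ∧
      G.Adj (sigma' cs nb r t i).1 (sigma' cs nb r t i).2.1 := by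
  intro t
  induction t with
  | zero => intro i; exact ⟨rfl, hnb _⟩
  | succ t ih =>
      intro i
      obtain ⟨h1, h2⟩ := ih i
      set s := sigma' cs nb r t i with hs
      set p' := cs.move (psim cs r t).1 (psim cs r t).2 i with hp'
      have hmv : G.Adj s.1 p' ∨ p' = s.1 := by
        have := cs.move_adj (psim cs r t).1 (psim cs r t).2 i
        rw [← h1] at this
        exact this
      have hstep : sigma' cs nb r (t+1) i = pairStep s p' := rfl
      have hgoal2 : (psim cs r (t+1)).2.1 i = p' := rfl
      rw [hstep, hgoal2]
      unfold pairStep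
      split_ifs with hpp
      · exact ⟨hpp.symm, h2⟩
      · exact ⟨rfl, (hmv.resolve_right hpp).symm⟩

lemma sigma'_adj (cs : PassiveCopStrategy G n) (nb : V → V)
    (hnb : ∀ v, G.Adj v (nb v)) (r : ℕ → V) (t : ℕ) (i : Fin n) :
    G.Adj (cop1 (sigma' cs nb r t i)) (cop1 (sigma' cs nb r (t+1) i)) ∧
    G.Adj (cop2 (sigma' cs nb r t i)) (cop2 (sigma' cs nb r (t+1) i)) := by
  obtain ⟨h1, h2⟩ := sigma'_inv cs nb hnb r t i
  set s := sigma' cs nb r t i with hs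
  set p' := cs.move (psim cs r t).1 (psim cs r t).2 i with hp'
  have hmv : G.Adj s.1 p' ∨ p' = s.1 := by
    have := cs.move_adj (psim cs r t).1 (psim cs r t).2 i
    rw [← h1] at this
    exact this
  have hstep : sigma' cs nb r (t+1) i = pairStep s p' := rfl
  rw [hstep]
  unfold pairStep
  split_ifs with hpp
  · cases hb : s.2.2 <;> simp [cop1, cop2, hb]
    · exact ⟨h2.symm, h2⟩
    · exact ⟨h2, h2.symm⟩
  · have hadj : G.Adj s.1 p' := hmv.resolve_right hpp
    cases hb : s.2.2 <;> simp [cop1, cop2, hb]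
    · exact ⟨h2.symm, hadj⟩
    · exact ⟨hadj, h2.symm⟩

lemma apos_adj (cs : PassiveCopStrategy G n) (nb : V → V)
    (hnb : ∀ v, G.Adj v (nb v)) (r : ℕ → V) (t : ℕ) (j : Fin (2 * n)) :
    G.Adj (apos cs nb r t j) (apos cs nb r (t+1) j) := by
  unfold apos
  split_ifs with h
  · exact (sigma'_adj cs nb hnb r t _).1
  · exact (sigma'_adj cs nb hnb r t _).2

lemma exists_apos (cs : PassiveCopStrategy G n) (nb : V → V) (r : ℕ → V) (t : ℕ)
    (i : Fin n) : ∃ j : Fin (2 * n), apos cs nb r t j = (sigma' cs nb r t i).1 := by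
  rcases cop12 (sigma' cs nb r t i) with h | h
  · refine ⟨⟨(i : ℕ), by have := i.isLt; omega⟩, ?_⟩
    rw [apos, dif_pos i.isLt]
    simpa using h
  · refine ⟨⟨n + (i : ℕ), by have := i.isLt; omega⟩, ?_⟩
    have hn : ¬ (n + (i : ℕ) < n) := by omega
    simp only [apos, dif_neg hn]
    have hidx : (⟨n + (i : ℕ) - n, by have := i.isLt; omega⟩ : Fin n) = i := by
      ext; simp
    rw [hidx]
    exact h

/-! ### The active strategy -/

/-- Robber positions read off from an active history and current configuration. -/
def rOf (h : List (CRConfig V (2 * n))) (c : CRConfig V (2 * n)) : ℕ → V :=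
  fun s => (h.map Prod.snd).getD s c.2

def acsInit (cs : PassiveCopStrategy G n) (nb : V → V) : Fin (2 * n) → V := fun j =>
  if h : (j : ℕ) < n then cs.init ⟨j, h⟩
  else nb (cs.init ⟨(j : ℕ) - n, by have := j.isLt; omega⟩)

lemma apos_zero (cs : PassiveCopStrategy G n) (nb : V → V) (r : ℕ → V) :
    apos cs nb r 0 = acsInit cs nb := by
  funext j
  unfold apos acsInit
  split_ifs with h <;> rfl

noncomputable def acs (cs : PassiveCopStrategy G n) (nb : V → V) (hnb : ∀ v, G.Adj v (nb v)) :
    ActiveCopStrategy G (2 * n) where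
  init := acsInit cs nb
  move := fun h c j =>
    if c.1 j = apos cs nb (rOf h c) h.length j
    then apos cs nb (rOf h c) (h.length + 1) j
    else nb (c.1 j)
  move_adj := by
    intro h c j
    split_ifs with hc
    · rw [hc]; exact apos_adj cs nb hnb _ _ _
    · exact hnb _

lemma acs_move (cs : PassiveCopStrategy G n) (nb : V → V) (hnb : ∀ v, G.Adj v (nb v))
    (h : List (CRConfig V (2 * n))) (c : CRConfig V (2 * n)) (j : Fin (2 * n)) :
    (acs cs nb hnb).move h c j =
      if c.1 j = apos cs nb (rOf h c) h.length j
      then apos cs nb (rOf h c) (h.length + 1) j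
      else nb (c.1 j) := rfl

theorem activeWin (cs : PassiveCopStrategy G n) (nb : V → V)
    (hnb : ∀ v, G.Adj v (nb v))
    (hwin : ∀ rs' : PassiveRobberStrategy G n, PassiveCapture cs rs') :
    ActiveCopsWin G (2 * n) := by
  refine ⟨acs cs nb hnb, ?_⟩
  intro rs
  set AC := acs cs nb hnb with hACdef
  set A : ℕ → List (CRConfig V (2 * n)) × CRConfig V (2 * n) :=
    fun t => crPlay (2 * n) AC.init rs.init AC.move rs.move t with hAdef
  set rA : ℕ → V := fun t => (A t).2.2 with hrAdef
  have hAsucc : ∀ t, A (t + 1) = ((A t).1 ++ [(A t).2],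
      (AC.move (A t).1 (A t).2,
        rs.move (A t).1 (AC.move (A t).1 (A t).2, (A t).2.2))) := fun t => rfl
  have hlenA : ∀ t, (A t).1.length = t := fun t => crPlay_length _ _ _ _ t
  have hrOf : ∀ t s, s ≤ t → rOf (A t).1 (A t).2 s = rA s := by
    intro t s hs
    rcases lt_or_eq_of_le hs with hlt | heq
    · exact crPlay_getD _ _ _ _ hlt _
    · subst heq
      exact crPlay_getD_ge _ _ _ _ le_rfl _
  have moveAux : ∀ t, (A t).2.1 = apos cs nb rA t →
      ∀ j, AC.move (A t).1 (A t).2 j = apos cs nb rA (t + 1) j := by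
    intro t hc j
    rw [hACdef, acs_move, hlenA t,
      apos_congr cs nb (fun s hs => hrOf t s (le_of_lt hs)),
      apos_congr cs nb (r' := rA) (fun s hs => hrOf t s (by omega)),
      hc, if_pos rfl]
  have hcop : ∀ t, (A t).2.1 = apos cs nb rA t ∧
      ∀ j, AC.move (A t).1 (A t).2 j = apos cs nb rA (t + 1) j := by
    intro t
    induction t with
    | zero =>
        have hc0 : (A 0).2.1 = apos cs nb rA 0 := (apos_zero cs nb rA).symm
        exact ⟨hc0, moveAux 0 hc0⟩
    | succ t ih =>
        have hc : (A (t + 1)).2.1 = apos cs nb rA (t + 1) := by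
          funext j
          have h1 : (A (t + 1)).2.1 = AC.move (A t).1 (A t).2 := by rw [hAsucc]
          rw [h1]
          exact ih.2 j
        exact ⟨hc, moveAux (t + 1) hc⟩
  -- the passive robber mimicking the active one
  set rs' : PassiveRobberStrategy G n :=
    { init := fun _ => rA 0
      move := fun h c =>
        if G.Adj c.2 (rA (h.length + 1)) then rA (h.length + 1) else c.2
      move_adj := by
        intro h c
        split_ifs with h'
        · exact Or.inl h'
        · exact Or.inr rfl } with hrs'def
  set P : ℕ → List (CRConfig V n) × CRConfig V n :=
    fun t => crPlay n cs.init rs'.init cs.move rs'.move t with hPdef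
  have hrAadj : ∀ t, G.Adj (rA t) (rA (t + 1)) := by
    intro t
    have h1 : rA (t + 1) = rs.move (A t).1 (AC.move (A t).1 (A t).2, (A t).2.2) := by
      show (A (t+1)).2.2 = _
      rw [hAsucc]
    rw [h1]
    exact rs.move_adj (A t).1 (AC.move (A t).1 (A t).2, (A t).2.2)
  have hP : ∀ t, P t = psim cs rA t := by
    intro t
    induction t with
    | zero => rfl
    | succ t ih =>
        have hstep : P (t + 1) = ((P t).1 ++ [(P t).2],
            (cs.move (P t).1 (P t).2,
              rs'.move (P t).1 (cs.move (P t).1 (P t).2, (P t).2.2))) := rfl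
        have hpsimstep : psim cs rA (t + 1) = ((psim cs rA t).1 ++ [(psim cs rA t).2],
            (cs.move (psim cs rA t).1 (psim cs rA t).2, rA (t + 1))) := rfl
        rw [hstep, hpsimstep, ih]
        have hmv : rs'.move (psim cs rA t).1
            (cs.move (psim cs rA t).1 (psim cs rA t).2, (psim cs rA t).2.2)
            = rA (t + 1) := by
          show (if G.Adj (psim cs rA t).2.2 (rA ((psim cs rA t).1.length + 1))
            then rA ((psim cs rA t).1.length + 1) else (psim cs rA t).2.2) = rA (t + 1)
          rw [psim_len, psim_snd, if_pos (hrAadj t)]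
        rw [hmv]
  -- transfer the capture
  obtain ⟨t, hcase⟩ := hwin rs'
  refine ⟨t, ?_⟩
  rcases hcase with ⟨i, hi⟩ | ⟨i, hi⟩
  · left
    have hi' : (psim cs rA t).2.1 i = rA t := by
      have h1 := hi
      rw [show (crPlay n cs.init rs'.init cs.move rs'.move t) = psim cs rA t
        from hP t, psim_snd] at h1
      exact h1
    obtain ⟨j, hj⟩ := exists_apos cs nb rA t i
    refine ⟨j, ?_⟩
    show (A t).2.1 j = (A t).2.2
    rw [(hcop t).1, hj, (sigma'_inv cs nb hnb rA t i).1, hi']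
  · right
    have hi' : cs.move (psim cs rA t).1 (psim cs rA t).2 i = rA t := by
      have := hi
      rw [show (crPlay n cs.init rs'.init cs.move rs'.move t) = psim cs rA t
        from hP t, psim_snd] at this
      exact this
    obtain ⟨j, hj⟩ := exists_apos cs nb rA (t + 1) i
    refine ⟨j, ?_⟩
    show AC.move (A t).1 (A t).2 j = (A t).2.2
    rw [(hcop t).2 j, hj, (sigma'_inv cs nb hnb rA (t+1) i).1]
    show (psim cs rA (t+1)).2.1 i = rA t
    rw [show (psim cs rA (t+1)).2.1 = cs.move (psim cs rA t).1 (psim cs rA t).2 from rfl]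
    exact hi'

end AcopAux

/-- For every finite connected graph `G`, `acop(G) ≤ 2 ⬝ cop(G)`. -/
theorem acop_le_two_mul_copNumber {V : Type u} [Fintype V]
    (G : SimpleGraph V) (hconn : G.Connected) :
    acop G ≤ 2 * copNumber G := by

  classical
  have hne : Nonempty V := hconn.nonempty
  by_cases hsub : ∃ a b : V, G.Adj a b
  · obtain ⟨a, b, hab⟩ := hsub
    have hnb' : ∀ v : V, ∃ u, G.Adj v u := by
      intro v
      by_cases hva : v = a
      · subst hva; exact ⟨b, hab⟩
      · obtain ⟨p⟩ := hconn v a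
        cases p with
        | nil => exact absurd rfl hva
        | cons h _ => exact ⟨_, h⟩
    choose nb hnb using hnb'
    have hpass : PassiveCopsWin G (Fintype.card V) := by
      refine ⟨⟨fun i => (Fintype.equivFin V).symm i, fun _ c i => c.1 i,
        fun _ _ _ => Or.inr rfl⟩, ?_⟩
      intro rsx
      refine ⟨0, Or.inl ⟨Fintype.equivFin V (rsx.init fun i => (Fintype.equivFin V).symm i), ?_⟩⟩
      exact Equiv.symm_apply_apply _ _
    have hmem : PassiveCopsWin G (copNumber G) := Nat.sInf_mem (s := {n | PassiveCopsWin G n}) ⟨_, hpass⟩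
    obtain ⟨cs, hwin⟩ := hmem
    exact Nat.sInf_le (AcopAux.activeWin cs nb hnb hwin)
  · -- `G` has no edges: no active robber strategy exists, so zero cops win.
    have h0 : ActiveCopsWin G 0 := by
      refine ⟨⟨fun i => i.elim0, fun _ _ i => i.elim0, fun _ _ i => i.elim0⟩, ?_⟩
      intro rsx
      exact absurd (rsx.move_adj [] ((fun i => i.elim0), Classical.arbitrary V))
        (fun h => hsub ⟨_, _, h⟩)
    calc acop G ≤ 0 := Nat.sInf_le h0
      _ ≤ 2 * copNumber G := Nat.zero_le _
end

section
/- For every finite connected graph G, cop(G) ≤ acop(G) + 1. -/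
open SimpleGraph

universe u v

variable {V : Type u}

open scoped Classical

section Aux

variable {V : Type u} (G : SimpleGraph V)

/-- A guarded move: go to `d` if that is a legal passive move from `u`, else stay. -/
noncomputable def grd (u d : V) : V := if G.Adj u d ∨ d = u then d else u

lemma grd_eq {u d : V} (h : G.Adj u d ∨ d = u) : grd G u d = d := if_pos h

lemma grd_spec (u d : V) : G.Adj u (grd G u d) ∨ grd G u d = u := by
  unfold grd; split
  · next h => exact h
  · exact Or.inr rfl

lemma exists_closer (hc : G.Connected) {u v : V} (h : u ≠ v) :
    ∃ w, G.Adj u w ∧ G.dist w v < G.dist u v := by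
  have h0 : G.dist u v ≠ 0 := by
    rw [SimpleGraph.dist_ne_zero_iff_ne_and_reachable]
    exact ⟨h, hc u v⟩
  obtain ⟨p, hp⟩ := SimpleGraph.exists_walk_of_dist_ne_zero h0
  cases p with
  | nil => exact absurd rfl h
  | cons hadj q =>
    refine ⟨_, hadj, ?_⟩
    have hq := SimpleGraph.dist_le q
    simp only [SimpleGraph.Walk.length_cons] at hp
    omega

/-- One step from `u` towards `v` along a geodesic. -/
noncomputable def stepT (hc : G.Connected) (u v : V) : V :=
  if h : u = v then u else Classical.choose (exists_closer G hc h)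

lemma stepT_adj (hc : G.Connected) {u v : V} (h : u ≠ v) :
    G.Adj u (stepT G hc u v) ∧ G.dist (stepT G hc u v) v < G.dist u v := by
  unfold stepT; rw [dif_neg h]; exact Classical.choose_spec (exists_closer G hc h)

variable [Fintype V]

/-- The `j`-th target vertex in a cyclic enumeration. -/
noncomputable def targetV (hne : Nonempty V) (j : ℕ) : V :=
  (Fintype.equivFin V).symm ⟨j % Fintype.card V, Nat.mod_lt _ Fintype.card_pos⟩

/-- The state (position, phase) of the patrolling cop. -/
noncomputable def tourState (hc : G.Connected) : ℕ → V × ℕ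
  | 0 => (targetV hc.nonempty 0, 0)
  | t + 1 =>
      let s := tourState hc t
      if s.1 = targetV hc.nonempty s.2 then (s.1, s.2 + 1)
      else (stepT G hc s.1 (targetV hc.nonempty s.2), s.2)

lemma tourState_succ (hc : G.Connected) (t : ℕ) :
    tourState G hc (t + 1) =
      if (tourState G hc t).1 = targetV hc.nonempty (tourState G hc t).2 then
        ((tourState G hc t).1, (tourState G hc t).2 + 1)
      else (stepT G hc (tourState G hc t).1 (targetV hc.nonempty (tourState G hc t).2),
        (tourState G hc t).2) := rfl

lemma exists_tour (hc : G.Connected) :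
    ∃ tour : ℕ → V, (∀ t, G.Adj (tour t) (tour (t + 1)) ∨ tour (t + 1) = tour t) ∧
      (∀ v : V, ∀ T : ℕ, ∃ t, T ≤ t ∧ tour t = v) := by
  have hne := hc.nonempty
  refine ⟨fun t => (tourState G hc t).1, ?_, ?_⟩
  · intro t
    show G.Adj (tourState G hc t).1 (tourState G hc (t+1)).1 ∨
      (tourState G hc (t+1)).1 = (tourState G hc t).1
    rw [tourState_succ]
    split
    · exact Or.inr rfl
    · next h => exact Or.inl (stepT_adj G hc h).1
  · have reach : ∀ d t, G.dist (tourState G hc t).1 (targetV hne (tourState G hc t).2) = d →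
        ∃ t', t ≤ t' ∧ (tourState G hc t').2 = (tourState G hc t).2 ∧
          (tourState G hc t').1 = targetV hne (tourState G hc t).2 := by
      intro d
      induction d using Nat.strong_induction_on with
      | _ d ih =>
        intro t hd
        by_cases h : (tourState G hc t).1 = targetV hne (tourState G hc t).2
        · exact ⟨t, le_refl t, rfl, h⟩
        · have hstep := stepT_adj G hc h
          have h1 : tourState G hc (t+1) =
              (stepT G hc (tourState G hc t).1 (targetV hne (tourState G hc t).2),
                (tourState G hc t).2) := by
            rw [tourState_succ, if_neg h]
          have h2 : (tourState G hc (t+1)).2 = (tourState G hc t).2 := by rw [h1]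
          have h3 : G.dist (tourState G hc (t+1)).1 (targetV hne (tourState G hc (t+1)).2) < d := by
            rw [h1, ← hd]; exact hstep.2
          obtain ⟨t', ht', hp, hv⟩ := ih _ h3 (t+1) rfl
          rw [h2] at hp hv
          exact ⟨t', by omega, hp, hv⟩
    have phase : ∀ j, ∃ t, (tourState G hc t).2 = j ∧ (tourState G hc t).1 = targetV hne j := by
      intro j
      induction j with
      | zero =>
        obtain ⟨t, _, hp, hv⟩ := reach _ 0 rfl
        have h0 : (tourState G hc 0).2 = 0 := rfl
        rw [h0] at hp hv
        exact ⟨t, hp, hv⟩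
      | succ j ihj =>
        obtain ⟨t, hp, hv⟩ := ihj
        have h1 : tourState G hc (t+1) = ((tourState G hc t).1, (tourState G hc t).2 + 1) := by
          rw [tourState_succ, if_pos (by rw [hp]; exact hv)]
        have h2 : (tourState G hc (t+1)).2 = j + 1 := by
          rw [h1]; show (tourState G hc t).2 + 1 = j + 1; omega
        obtain ⟨t', _, hp', hv'⟩ := reach _ (t+1) rfl
        rw [h2] at hp' hv'
        exact ⟨t', hp', hv'⟩
    have ple : ∀ t, (tourState G hc t).2 ≤ t := by
      intro t
      induction t with
      | zero => exact le_of_eq rfl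
      | succ t iht =>
        rw [tourState_succ]; split
        · show (tourState G hc t).2 + 1 ≤ t + 1; omega
        · show (tourState G hc t).2 ≤ t + 1; omega
    intro v T
    obtain ⟨t, hp, hv⟩ := phase ((Fintype.equivFin V) v + T * Fintype.card V)
    have hc1 : (0:ℕ) < Fintype.card V := Fintype.card_pos
    refine ⟨t, ?_, ?_⟩
    · have h1 := ple t
      have h2 : T * Fintype.card V ≤ t := by omega
      calc T ≤ T * Fintype.card V := Nat.le_mul_of_pos_right T hc1
        _ ≤ t := h2
    · show (fun t => (tourState G hc t).1) t = v
      show (tourState G hc t).1 = v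
      rw [hv]
      unfold targetV
      have hmod : (((Fintype.equivFin V) v : ℕ) + T * Fintype.card V) % Fintype.card V
          = ((Fintype.equivFin V) v : ℕ) := by
        rw [Nat.add_mul_mod_self_right, Nat.mod_eq_of_lt ((Fintype.equivFin V) v).2]
      have : (⟨_, Nat.mod_lt _ Fintype.card_pos⟩ : Fin (Fintype.card V)) = (Fintype.equivFin V) v :=
        Fin.ext hmod
      rw [this, Equiv.symm_apply_apply]

end Aux

section Sim

variable {V : Type u} (G : SimpleGraph V) {m n : ℕ}

lemma crPlay_hist (n : ℕ) (ci : Fin n → V) (ri : (Fin n → V) → V)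
    (cm : List (CRConfig V n) → CRConfig V n → Fin n → V)
    (rm : List (CRConfig V n) → CRConfig V n → V) :
    ∀ t, (crPlay n ci ri cm rm t).1 = (List.range t).map (fun j => (crPlay n ci ri cm rm j).2)
  | 0 => rfl
  | (t+1) => by
      rw [List.range_succ, List.map_append]
      show (crPlay n ci ri cm rm t).1 ++ [(crPlay n ci ri cm rm t).2] = _
      rw [crPlay_hist n ci ri cm rm t]
      rfl

lemma crPlay_hist_len (n : ℕ) (ci : Fin n → V) (ri : (Fin n → V) → V)
    (cm : List (CRConfig V n) → CRConfig V n → Fin n → V)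
    (rm : List (CRConfig V n) → CRConfig V n → V) (t : ℕ) :
    (crPlay n ci ri cm rm t).1.length = t := by
  rw [crPlay_hist]; simp

lemma crPlay_succ (n : ℕ) (ci : Fin n → V) (ri : (Fin n → V) → V)
    (cm : List (CRConfig V n) → CRConfig V n → Fin n → V)
    (rm : List (CRConfig V n) → CRConfig V n → V) (t : ℕ) :
    crPlay n ci ri cm rm (t+1) =
      ((crPlay n ci ri cm rm t).1 ++ [(crPlay n ci ri cm rm t).2],
       (cm (crPlay n ci ri cm rm t).1 (crPlay n ci ri cm rm t).2,
        rm (crPlay n ci ri cm rm t).1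
          (cm (crPlay n ci ri cm rm t).1 (crPlay n ci ri cm rm t).2,
           (crPlay n ci ri cm rm t).2.2))) := rfl

/-- The simulated active game state (imaginary history and imaginary cop positions)
reconstructed from the reversed list of robber positions. -/
noncomputable def simSt (cs : ActiveCopStrategy G m) : List V → List (CRConfig V m) × (Fin m → V)
  | [] => ([], cs.init)
  | [_] => ([], cs.init)
  | r' :: r :: rest =>
      let s := simSt cs (r :: rest)
      if r' = r then s else (s.1 ++ [(s.2, r)], cs.move s.1 (s.2, r))

lemma simSt_cons (cs : ActiveCopStrategy G m) (r' r : V) (rest : List V) :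
    simSt G cs (r' :: r :: rest) =
      if r' = r then simSt G cs (r :: rest)
      else ((simSt G cs (r :: rest)).1 ++ [((simSt G cs (r :: rest)).2, r)],
        cs.move (simSt G cs (r :: rest)).1 ((simSt G cs (r :: rest)).2, r)) := rfl

/-- The passive strategy with one extra cop simulating an active strategy. -/
noncomputable def pStrat (cs : ActiveCopStrategy G m) (tour : ℕ → V) :
    PassiveCopStrategy G (m+1) where
  init i := if h : (i : ℕ) < m then cs.init ⟨i, h⟩ else tour 0
  move h c i :=
    if hi : (i : ℕ) < m then
      grd G (c.1 i) (cs.move (simSt G cs (c.2 :: (h.map Prod.snd).reverse)).1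
        ((simSt G cs (c.2 :: (h.map Prod.snd).reverse)).2, c.2) ⟨i, hi⟩)
    else grd G (c.1 i) (tour (h.length + 1))
  move_adj := by
    intro h c i
    split <;> exact grd_spec G _ _

lemma pStrat_init (cs : ActiveCopStrategy G m) (tour : ℕ → V) (i : Fin (m+1)) :
    (pStrat G cs tour).init i =
      if h : (i : ℕ) < m then cs.init ⟨i, h⟩ else tour 0 := rfl

lemma pStrat_move (cs : ActiveCopStrategy G m) (tour : ℕ → V)
    (h : List (CRConfig V (m+1))) (c : CRConfig V (m+1)) (i : Fin (m+1)) :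
    (pStrat G cs tour).move h c i =
      if hi : (i : ℕ) < m then
        grd G (c.1 i) (cs.move (simSt G cs (c.2 :: (h.map Prod.snd).reverse)).1
          ((simSt G cs (c.2 :: (h.map Prod.snd).reverse)).2, c.2) ⟨i, hi⟩)
      else grd G (c.1 i) (tour (h.length + 1)) := rfl

end Sim

/-- The heart of the proof: the passive strategy `pStrat` (an extra patrolling cop
together with `m` cops simulating a winning active strategy) captures every
passive robber. -/
lemma pStrat_captures {V : Type u} [Fintype V] (G : SimpleGraph V) {m : ℕ}
    (cs : ActiveCopStrategy G m) (hcs : ∀ rs : ActiveRobberStrategy G m, ActiveCapture cs rs)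
    (tour : ℕ → V) (htour1 : ∀ t, G.Adj (tour t) (tour (t + 1)) ∨ tour (t + 1) = tour t)
    (htour2 : ∀ v : V, ∀ T : ℕ, ∃ t, T ≤ t ∧ tour t = v)
    (nbf : V → V) (hnbf : ∀ v, G.Adj v (nbf v))
    (prs : PassiveRobberStrategy G (m + 1)) :
    PassiveCapture (pStrat G cs tour) prs := by
  classical
  set ps := pStrat G cs tour with hps
  set P : ℕ → List (CRConfig V (m+1)) × CRConfig V (m+1) :=
    crPlay (m+1) ps.init prs.init ps.move prs.move with hPdef
  set r : ℕ → V := fun t => (P t).2.2 with hrdef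
  show ∃ t, ((∃ i, (P t).2.1 i = (P t).2.2) ∨ (∃ i, ps.move (P t).1 (P t).2 i = (P t).2.2))
  have hlen : ∀ t, (P t).1.length = t := crPlay_hist_len _ _ _ _ _
  have hposS : ∀ t (i : Fin (m+1)), (P (t+1)).2.1 i = ps.move (P t).1 (P t).2 i :=
    fun t i => rfl
  have hradj : ∀ t, G.Adj (r t) (r (t+1)) ∨ r (t+1) = r t := by
    intro t
    exact prs.move_adj (P t).1 (ps.move (P t).1 (P t).2, (P t).2.2)
  -- the patrolling cop
  have hlastpos : ∀ t, (P t).2.1 (Fin.last m) = tour t := by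
    intro t
    induction t with
    | zero =>
      show (pStrat G cs tour).init (Fin.last m) = tour 0
      rw [pStrat_init, dif_neg (by simp)]
    | succ t ih =>
      rw [hposS t, hps, pStrat_move, dif_neg (by simp), hlen t, ih]
      exact grd_eq G (htour1 t)
  have hmove_last : ∀ t, ps.move (P t).1 (P t).2 (Fin.last m) = tour (t+1) := by
    intro t
    rw [hps, pStrat_move, dif_neg (by simp), hlen t, hlastpos t]
    exact grd_eq G (htour1 t)
  by_cases hB : ∀ T, ∃ d, r (T + d + 1) ≠ r T
  case neg =>
    -- the robber is eventually constant; the patrolling cop catches him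
    push_neg at hB
    obtain ⟨T, hT⟩ := hB
    have hconst : ∀ w, r (T + w) = r T := by
      intro w
      cases w with
      | zero => rfl
      | succ d => exact hT d
    obtain ⟨t', ht'1, ht'2⟩ := htour2 (r T) (T+1)
    obtain ⟨u, rfl⟩ : ∃ u, t' = u + 1 := ⟨t' - 1, by omega⟩
    have hru : r u = r T := by
      have h := hconst (u - T)
      rw [show T + (u - T) = u from by omega] at h
      exact h
    refine ⟨u, Or.inr ⟨Fin.last m, ?_⟩⟩
    rw [hmove_last u, ht'2]
    exact hru.symm
  case pos =>
    -- the robber moves infinitely often: simulate the active game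
    set s : ℕ → ℕ := fun k => Nat.rec 0 (fun _ sk => sk + Nat.find (hB sk) + 1) k with hsdef
    have hs0 : s 0 = 0 := rfl
    have hss : ∀ k, s (k+1) = s k + Nat.find (hB (s k)) + 1 := fun k => rfl
    have hsconst : ∀ k t, s k ≤ t → t < s (k+1) → r t = r (s k) := by
      intro k t h1 h2
      rw [hss] at h2
      obtain ⟨d, rfl⟩ : ∃ d, t = s k + d := ⟨t - s k, by omega⟩
      cases d with
      | zero => rfl
      | succ d' =>
        have hd : d' < Nat.find (hB (s k)) := by omega
        have hmin := Nat.find_min (hB (s k)) hd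
        exact not_ne_iff.mp hmin
    have hsmove : ∀ k, r (s (k+1)) ≠ r (s k) := by
      intro k
      rw [hss]
      exact Nat.find_spec (hB (s k))
    have hsmono : ∀ k, s k < s (k+1) := by intro k; rw [hss]; omega
    have hsge : ∀ k, k ≤ s k := by
      intro k
      induction k with
      | zero => exact Nat.zero_le _
      | succ k ih => have := hsmono k; omega
    have hsmonole : ∀ a b : ℕ, a ≤ b → s a ≤ s b :=
      fun a b h => (monotone_nat_of_le_succ (fun n => (hsmono n).le)) h
    set κ : ℕ → ℕ := fun t => Nat.findGreatest (fun k => s k ≤ t) t with hκdef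
    have hκ1 : ∀ t, s (κ t) ≤ t := by
      intro t
      exact Nat.findGreatest_spec (P := fun k => s k ≤ t) (Nat.zero_le t)
        (show s 0 ≤ t by rw [hs0]; exact Nat.zero_le t)
    have hκ2 : ∀ t, t < s (κ t + 1) := by
      intro t
      by_contra h
      push_neg at h
      have h2 : κ t + 1 ≤ t := le_trans (hsge _) h
      exact Nat.findGreatest_is_greatest (Nat.lt_succ_self _) h2 h
    have hκuniq : ∀ t k, s k ≤ t → t < s (k+1) → κ t = k := by
      intro t k h1 h2
      have ha := hκ1 t
      have hb := hκ2 t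
      rcases lt_trichotomy (κ t) k with h | h | h
      · have := hsmonole (κ t + 1) k h
        omega
      · exact h
      · have := hsmonole (k + 1) (κ t) h
        omega
    have hκ0 : κ 0 = 0 := by
      refine hκuniq 0 0 (by rw [hs0]) ?_
      have := hsmono 0
      omega
    have hκstep : ∀ t, (κ (t+1) = κ t ∧ t + 1 < s (κ t + 1)) ∨
        (κ (t+1) = κ t + 1 ∧ t + 1 = s (κ t + 1)) := by
      intro t
      have ha := hκ1 t
      have hb := hκ2 t
      rcases Nat.lt_or_ge (t+1) (s (κ t + 1)) with h | h
      · exact Or.inl ⟨hκuniq (t+1) (κ t) (by omega) h, h⟩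
      · have he : t + 1 = s (κ t + 1) := by omega
        refine Or.inr ⟨hκuniq (t+1) (κ t + 1) (by omega) ?_, he⟩
        rw [← he] at *
        have := hsmono (κ t + 1)
        omega
    have hrt : ∀ t, r t = r (s (κ t)) := fun t => hsconst (κ t) t (hκ1 t) (hκ2 t)
    -- the imaginary active robber
    set ars : ActiveRobberStrategy G m :=
      ⟨fun _ => r 0,
       fun h c => if G.Adj c.2 (r (s (h.length + 1))) then r (s (h.length + 1)) else nbf c.2,
       by
        intro h c
        split
        · next hA => exact hA
        · exact hnbf _⟩ with harsdef
    have hars_move : ∀ (h : List (CRConfig V m)) (c : CRConfig V m),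
        ars.move h c = if G.Adj c.2 (r (s (h.length + 1))) then r (s (h.length + 1))
          else nbf c.2 := fun _ _ => rfl
    set Q : ℕ → List (CRConfig V m) × CRConfig V m :=
      crPlay m cs.init ars.init cs.move ars.move with hQdef
    have hQlen : ∀ k, (Q k).1.length = k := crPlay_hist_len _ _ _ _ _
    have hadjs : ∀ k, G.Adj (r (s k)) (r (s (k+1))) := by
      intro k
      have h1 : r (s k + Nat.find (hB (s k))) = r (s k) :=
        hsconst k _ (by omega) (by rw [hss]; omega)
      have h2 := hradj (s k + Nat.find (hB (s k)))
      have h3 : s k + Nat.find (hB (s k)) + 1 = s (k+1) := (hss k).symm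
      rw [h3, h1] at h2
      rcases h2 with h | h
      · exact h
      · exact absurd h (hsmove k)
    have imrob : ∀ k, (Q k).2.2 = r (s k) := by
      intro k
      induction k with
      | zero => rfl
      | succ k ihk =>
        have h1 : (Q (k+1)).2.2 =
            ars.move (Q k).1 (cs.move (Q k).1 (Q k).2, (Q k).2.2) := rfl
        rw [h1, hars_move]
        dsimp only
        rw [hQlen k, ihk, if_pos (hadjs k)]
    have hrQ : ∀ t, r t = (Q (κ t)).2.2 := fun t => (hrt t).trans (imrob (κ t)).symm
    -- the reversed robber-position lists
    set RL : ℕ → List V := fun t => r t :: ((List.range t).map r).reverse with hRLdef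
    have hRLt : ∀ t, RL t = r t :: ((List.range t).map r).reverse := fun t => rfl
    have hRLs : ∀ t, RL (t+1) = r (t+1) :: RL t := by
      intro t
      rw [hRLt, hRLt, List.range_succ, List.map_append, List.reverse_append]
      rfl
    have hsimarg : ∀ t, ((P t).2.2 :: ((P t).1.map Prod.snd).reverse) = RL t := by
      intro t
      rw [hRLt]
      congr 1
      show ((crPlay (m+1) ps.init prs.init ps.move prs.move t).1.map Prod.snd).reverse = _
      rw [crPlay_hist, List.map_map]
      rfl
    have hsimmove : ∀ t (i : Fin m), ps.move (P t).1 (P t).2 (Fin.castSucc i)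
        = grd G ((P t).2.1 (Fin.castSucc i))
            (cs.move (simSt G cs (RL t)).1 ((simSt G cs (RL t)).2, r t) i) := by
      intro t i
      have hi : ((Fin.castSucc i : Fin (m+1)) : ℕ) < m := by simp
      have heq : (⟨((Fin.castSucc i : Fin (m+1)) : ℕ), hi⟩ : Fin m) = i := Fin.ext (by simp)
      rw [hps, pStrat_move, dif_pos hi, heq, hsimarg t]
    have hpos0 : ∀ i : Fin m, (P 0).2.1 (Fin.castSucc i) = cs.init i := by
      intro i
      have hi : ((Fin.castSucc i : Fin (m+1)) : ℕ) < m := by simp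
      have heq : (⟨((Fin.castSucc i : Fin (m+1)) : ℕ), hi⟩ : Fin m) = i := Fin.ext (by simp)
      show (pStrat G cs tour).init (Fin.castSucc i) = cs.init i
      rw [pStrat_init, dif_pos hi, heq]
    -- the master invariant
    have master : ∀ t, (simSt G cs (RL t) = ((Q (κ t)).1, (Q (κ t)).2.1)) ∧
        (∀ i : Fin m, ps.move (P t).1 (P t).2 (Fin.castSucc i) = (Q (κ t + 1)).2.1 i) := by
      intro t
      induction t with
      | zero =>
        have hA : simSt G cs (RL 0) = ((Q (κ 0)).1, (Q (κ 0)).2.1) := by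
          have h0 : RL 0 = [r 0] := by rw [hRLt]; simp
          rw [h0, hκ0]
          rfl
        refine ⟨hA, ?_⟩
        intro i
        rw [hsimmove 0 i, hA, hκ0]
        have hr0 : r 0 = (Q 0).2.2 := by rw [hrQ 0, hκ0]
        rw [hr0]
        rw [Prod.mk.eta]
        rw [hpos0 i]
        have hadj := cs.move_adj (Q 0).1 (Q 0).2 i
        exact grd_eq G (Or.inl hadj)
      | succ t ih =>
        obtain ⟨ihA, ihC⟩ := ih
        by_cases hmv : r (t+1) = r t
        · -- the robber passed
          have hknext : κ (t+1) = κ t := by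
            rcases hκstep t with ⟨h1, _⟩ | ⟨h1, h2⟩
            · exact h1
            · exfalso
              apply hsmove (κ t)
              rw [← h2, hmv, hrt t]
          have hA : simSt G cs (RL (t+1)) = ((Q (κ (t+1))).1, (Q (κ (t+1))).2.1) := by
            rw [hRLs t, hRLt t, simSt_cons, if_pos hmv, ← hRLt t, ihA, hknext]
          refine ⟨hA, ?_⟩
          intro i
          rw [hsimmove (t+1) i, hA, hknext]
          have hcur : (P (t+1)).2.1 (Fin.castSucc i) = (Q (κ t + 1)).2.1 i := by
            rw [hposS t]
            exact ihC i
          have hr1 : r (t+1) = (Q (κ t)).2.2 := by rw [hrQ (t+1), hknext]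
          rw [hr1, Prod.mk.eta, hcur]
          have htar : cs.move (Q (κ t)).1 (Q (κ t)).2 i = (Q (κ t + 1)).2.1 i := rfl
          rw [htar]
          exact grd_eq G (Or.inr rfl)
        · -- the robber moved
          have hstep : κ (t+1) = κ t + 1 ∧ t + 1 = s (κ t + 1) := by
            rcases hκstep t with ⟨h1, h2⟩ | h
            · exfalso
              apply hmv
              rw [hsconst (κ t) (t+1) (by have := hκ1 t; omega) h2, hrt t]
            · exact h
          have hA : simSt G cs (RL (t+1)) = ((Q (κ (t+1))).1, (Q (κ (t+1))).2.1) := by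
            rw [hRLs t, hRLt t, simSt_cons, if_neg hmv, ← hRLt t, ihA, hstep.1]
            rw [hrQ t, Prod.mk.eta]
            rfl
          refine ⟨hA, ?_⟩
          intro i
          rw [hsimmove (t+1) i, hA, hstep.1]
          have hcur : (P (t+1)).2.1 (Fin.castSucc i) = (Q (κ t + 1)).2.1 i := by
            rw [hposS t]
            exact ihC i
          have hr1 : r (t+1) = (Q (κ t + 1)).2.2 := by rw [hrQ (t+1), hstep.1]
          rw [hr1, Prod.mk.eta, hcur]
          have hadj := cs.move_adj (Q (κ t + 1)).1 (Q (κ t + 1)).2 i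
          have htar : cs.move (Q (κ t + 1)).1 (Q (κ t + 1)).2 i = (Q (κ t + 2)).2.1 i := rfl
          rw [← htar]
          exact grd_eq G (Or.inl hadj)
    -- transfer the imaginary capture to the real game
    obtain ⟨k, hk | hk⟩ := hcs ars
    · -- capture right after a robber move in the imaginary game
      rw [← hQdef] at hk
      obtain ⟨i, hi⟩ := hk
      cases k with
      | zero =>
        refine ⟨0, Or.inl ⟨Fin.castSucc i, ?_⟩⟩
        rw [hpos0 i]
        exact hi
      | succ k' =>
        obtain ⟨u, hu⟩ : ∃ u, s (k'+1) = u + 1 := ⟨s (k'+1) - 1, by have := hsge (k'+1); omega⟩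
        have hκu : κ u = k' := by
          refine hκuniq u k' ?_ (by omega)
          have := hsmono k'
          omega
        refine ⟨s (k'+1), Or.inl ⟨Fin.castSucc i, ?_⟩⟩
        rw [hu, hposS u, (master u).2 i, hκu]
        have h2 : (P (u+1)).2.2 = r (s (k'+1)) := by rw [← hu]
        rw [h2, ← imrob (k'+1)]
        exact hi
    · -- capture right after a cop move in the imaginary game
      rw [← hQdef] at hk
      obtain ⟨i, hi⟩ := hk
      have hκs : κ (s k) = k := hκuniq (s k) k (le_refl _) (hsmono k)
      refine ⟨s k, Or.inr ⟨Fin.castSucc i, ?_⟩⟩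
      rw [(master (s k)).2 i, hκs]
      have h1 : (Q (k+1)).2.1 i = cs.move (Q k).1 (Q k).2 i := rfl
      have h2 : (P (s k)).2.2 = r (s k) := rfl
      rw [h1, hi, h2, ← imrob k]
/-- For every finite connected graph `G`, `cop(G) ≤ acop(G) + 1`. -/
theorem copNumber_le_acop_add_one {V : Type u} [Fintype V]
    (G : SimpleGraph V) (hconn : G.Connected) :
    copNumber G ≤ acop G + 1 := by
  classical
  have hne : Nonempty V := hconn.nonempty
  rcases Nat.lt_or_ge 1 (Fintype.card V) with hcard | hcard
  case inr =>
    -- `V` has exactly one vertex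
    have hsub : Subsingleton V := by
      rw [← Fintype.card_le_one_iff_subsingleton]; omega
    have hwin : PassiveCopsWin G 1 := by
      refine ⟨⟨fun _ => Classical.arbitrary V, fun _ c i => c.1 i,
        fun _ _ _ => Or.inr rfl⟩, ?_⟩
      intro rs
      exact ⟨0, Or.inl ⟨0, Subsingleton.elim _ _⟩⟩
    have h1 : copNumber G ≤ 1 := Nat.sInf_le hwin
    omega
  case inl =>
    -- every vertex has a neighbour
    have hnb : ∀ v : V, ∃ w, G.Adj v w := by
      intro v
      obtain ⟨u, hu⟩ := Fintype.exists_ne_of_one_lt_card hcard v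
      obtain ⟨w, hw, -⟩ := exists_closer G hconn (Ne.symm hu)
      exact ⟨w, hw⟩
    choose nbf hnbf using hnb
    -- `card V` active cops win, so the set defining `acop` is nonempty
    have hactive : ActiveCopsWin G (Fintype.card V) := by
      refine ⟨⟨fun i => (Fintype.equivFin V).symm i, fun _ c i => nbf (c.1 i),
        fun _ _ _ => hnbf _⟩, ?_⟩
      intro rs
      refine ⟨0, Or.inl ⟨(Fintype.equivFin V) (rs.init fun i => (Fintype.equivFin V).symm i), ?_⟩⟩
      exact Equiv.symm_apply_apply _ _
    have hmem : ActiveCopsWin G (acop G) := Nat.sInf_mem (s := {n | ActiveCopsWin G n}) ⟨_, hactive⟩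
    obtain ⟨cs, hcs⟩ := hmem
    obtain ⟨tour, htour1, htour2⟩ := exists_tour G hconn
    have hwin : PassiveCopsWin G (acop G + 1) :=
      ⟨pStrat G cs tour, fun prs => pStrat_captures G cs hcs tour htour1 htour2 nbf hnbf prs⟩
    exact Nat.sInf_le hwin
end

section
/- Let G be a connected graph with cop(G) ≥ 2, and let G^{(t)} denote the t-blowup of G for a positive integer t. Then cop(G^{(t)}) = cop(G). -/
open SimpleGraph

universe u v

variable {V : Type u}

/-- The `t`-blowup of `G`: each vertex is replaced by an independent set of
`t` copies, and each edge by a complete bipartite graph between the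
corresponding sets. -/
def blowup (G : SimpleGraph V) (t : ℕ) : SimpleGraph (V × Fin t) where
  Adj a b := G.Adj a.1 b.1
  symm := ⟨fun _ _ h => G.adj_symm h⟩
  loopless := ⟨fun a h => G.irrefl (v := a.1) h⟩


/-! ### Auxiliary development -/

namespace CopsBlowupAux

open Classical List

/-- Unfolding lemma for `crPlay` at a successor step. -/
theorem crPlay_succ {n : ℕ} (ci : Fin n → V) (ri : (Fin n → V) → V)
    (cm : List (CRConfig V n) → CRConfig V n → Fin n → V)
    (rm : List (CRConfig V n) → CRConfig V n → V) (k : ℕ) :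
    crPlay n ci ri cm rm (k + 1) =
      ((crPlay n ci ri cm rm k).1 ++ [(crPlay n ci ri cm rm k).2],
        (cm (crPlay n ci ri cm rm k).1 (crPlay n ci ri cm rm k).2,
         rm (crPlay n ci ri cm rm k).1
           (cm (crPlay n ci ri cm rm k).1 (crPlay n ci ri cm rm k).2,
            (crPlay n ci ri cm rm k).2.2))) := rfl

theorem crPlay_hist {n : ℕ} (ci : Fin n → V) (ri : (Fin n → V) → V)
    (cm : List (CRConfig V n) → CRConfig V n → Fin n → V)
    (rm : List (CRConfig V n) → CRConfig V n → V) (k : ℕ) :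
    (crPlay n ci ri cm rm k).1 =
      (List.range k).map (fun m => (crPlay n ci ri cm rm m).2) := by
  induction k with
  | zero => rfl
  | succ k ih => rw [crPlay_succ, List.range_succ, List.map_append, ← ih, List.map_singleton]

theorem crPlay_len {n : ℕ} (ci : Fin n → V) (ri : (Fin n → V) → V)
    (cm : List (CRConfig V n) → CRConfig V n → Fin n → V)
    (rm : List (CRConfig V n) → CRConfig V n → V) (k : ℕ) :
    (crPlay n ci ri cm rm k).1.length = k := by
  rw [crPlay_hist]; simp

/-- Guarded move: move to `b` if adjacent, otherwise stay at `a`. -/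
noncomputable def guard (H : SimpleGraph V) (a b : V) : V := if H.Adj a b then b else a

theorem guard_adj (H : SimpleGraph V) (a b : V) :
    H.Adj a (guard H a b) ∨ guard H a b = a := by
  unfold guard; split_ifs with h
  · exact Or.inl h
  · exact Or.inr rfl

theorem guard_of_adj {H : SimpleGraph V} {a b : V} (h : H.Adj a b) : guard H a b = b :=
  if_pos h

theorem guard_of_not_adj {H : SimpleGraph V} {a b : V} (h : ¬ H.Adj a b) : guard H a b = a :=
  if_neg h

/-- Projection of a blowup configuration to a configuration on the base graph. -/
def projC {n t : ℕ} (c : CRConfig (V × Fin t) n) : CRConfig V n :=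
  (fun i => (c.1 i).1, c.2.1)

theorem blowup_adj {G : SimpleGraph V} {t : ℕ} {a b : V × Fin t} :
    (blowup G t).Adj a b ↔ G.Adj a.1 b.1 := Iff.rfl

section Pull

variable {G : SimpleGraph V} {t n : ℕ}

/-- One step of the reconstruction of the blowup play from the base-graph history. -/
noncomputable def simStep (ht : 0 < t) (cs' : PassiveCopStrategy (blowup G t) n) :
    Option (List (CRConfig (V × Fin t) n) × CRConfig (V × Fin t) n) → V →
      Option (List (CRConfig (V × Fin t) n) × CRConfig (V × Fin t) n)
  | none, r => some ([], (cs'.init, (r, ⟨0, ht⟩)))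
  | some (h, c), r => some (h ++ [c], (cs'.move h c, (r, ⟨0, ht⟩)))

noncomputable def sim (ht : 0 < t) (cs' : PassiveCopStrategy (blowup G t) n) (l : List V) :
    Option (List (CRConfig (V × Fin t) n) × CRConfig (V × Fin t) n) :=
  l.foldl (simStep ht cs') none

theorem simStep_none (ht : 0 < t) (cs' : PassiveCopStrategy (blowup G t) n) (r : V) :
    simStep ht cs' none r = some ([], (cs'.init, (r, ⟨0, ht⟩))) := rfl

theorem simStep_some (ht : 0 < t) (cs' : PassiveCopStrategy (blowup G t) n)
    (h : List (CRConfig (V × Fin t) n)) (c : CRConfig (V × Fin t) n) (r : V) :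
    simStep ht cs' (some (h, c)) r = some (h ++ [c], (cs'.move h c, (r, ⟨0, ht⟩))) := rfl

/-- The base-graph cop strategy obtained from a blowup cop strategy. -/
noncomputable def pullCop (ht : 0 < t) (cs' : PassiveCopStrategy (blowup G t) n) :
    PassiveCopStrategy G n where
  init i := (cs'.init i).1
  move h c i :=
    (sim ht cs' ((h.map Prod.snd) ++ [c.2])).elim (c.1 i)
      (fun HC => guard G (c.1 i) ((cs'.move HC.1 HC.2 i).1))
  move_adj h c i := by
    rcases sim ht cs' ((h.map Prod.snd) ++ [c.2]) with _ | HC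
    · exact Or.inr rfl
    · exact guard_adj G (c.1 i) _

/-- The blowup robber strategy obtained from a base-graph robber strategy. -/
noncomputable def liftRobber (ht : 0 < t) (G : SimpleGraph V) (n : ℕ)
    (rs : PassiveRobberStrategy G n) : PassiveRobberStrategy (blowup G t) n where
  init C := (rs.init (fun i => (C i).1), ⟨0, ht⟩)
  move h c := guard (blowup G t) c.2 (rs.move (h.map projC) (projC c), ⟨0, ht⟩)
  move_adj h c := guard_adj _ _ _

variable (ht : 0 < t) (cs' : PassiveCopStrategy (blowup G t) n)
  (rs : PassiveRobberStrategy G n)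

/-- The blowup play. -/
noncomputable def QQ (k : ℕ) : List (CRConfig (V × Fin t) n) × CRConfig (V × Fin t) n :=
  crPlay n cs'.init (liftRobber ht G n rs).init cs'.move (liftRobber ht G n rs).move k

/-- The projected play on the base graph. -/
noncomputable def PP (k : ℕ) : List (CRConfig V n) × CRConfig V n :=
  crPlay n (pullCop ht cs').init rs.init (pullCop ht cs').move rs.move k

theorem QQ_snd_snd (k : ℕ) : ((QQ ht cs' rs k).2.2).2 = (⟨0, ht⟩ : Fin t) := by
  induction k with
  | zero => rfl
  | succ k ih =>
      show ((liftRobber ht G n rs).move (QQ ht cs' rs k).1 _).2 = _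
      unfold liftRobber guard
      dsimp only
      split_ifs with h
      · rfl
      · exact ih

theorem sim_eval (k : ℕ) :
    sim ht cs' ((List.range (k + 1)).map (fun m => ((QQ ht cs' rs m).2.2).1)) =
      some ((QQ ht cs' rs k).1, (QQ ht cs' rs k).2) := by
  induction k with
  | zero =>
      show sim ht cs' [((QQ ht cs' rs 0).2.2).1] = _
      unfold sim
      rw [List.foldl_cons, List.foldl_nil, simStep_none]
      refine congrArg some (Prod.ext rfl (Prod.ext rfl (Prod.ext rfl ?_)))
      exact (QQ_snd_snd ht cs' rs 0).symm
  | succ k ih =>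
      rw [List.range_succ, List.map_append, List.map_singleton]
      unfold sim
      rw [List.foldl_append]
      unfold sim at ih
      rw [ih, List.foldl_cons, List.foldl_nil, simStep_some]
      refine congrArg some (Prod.ext rfl (Prod.ext rfl (Prod.ext rfl ?_)))
      exact (QQ_snd_snd ht cs' rs (k+1)).symm

theorem pull_move_eq (k : ℕ)
    (ih1 : (PP ht cs' rs k).1 = (QQ ht cs' rs k).1.map projC)
    (ih2 : (PP ht cs' rs k).2 = projC (QQ ht cs' rs k).2) (i : Fin n) :
    (pullCop ht cs').move (PP ht cs' rs k).1 (PP ht cs' rs k).2 i =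
      (cs'.move (QQ ht cs' rs k).1 (QQ ht cs' rs k).2 i).1 := by
  have harg : ((PP ht cs' rs k).1.map Prod.snd) ++ [(PP ht cs' rs k).2.2] =
      (List.range (k + 1)).map (fun m => ((QQ ht cs' rs m).2.2).1) := by
    rw [ih1, ih2, List.range_succ, List.map_append, List.map_singleton, List.map_map]
    congr 1
    show (QQ ht cs' rs k).1.map (Prod.snd ∘ projC) = _
    rw [show (QQ ht cs' rs k).1 = _ from crPlay_hist _ _ _ _ k, List.map_map]
    rfl
  show ((sim ht cs' (((PP ht cs' rs k).1.map Prod.snd) ++ [(PP ht cs' rs k).2.2])).elim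
      ((PP ht cs' rs k).2.1 i)
      (fun HC => guard G ((PP ht cs' rs k).2.1 i) ((cs'.move HC.1 HC.2 i).1))) = _
  rw [harg, sim_eval ht cs' rs k]
  show guard G ((PP ht cs' rs k).2.1 i) ((cs'.move (QQ ht cs' rs k).1 (QQ ht cs' rs k).2 i).1) = _
  have hcop : (PP ht cs' rs k).2.1 i = ((QQ ht cs' rs k).2.1 i).1 := by rw [ih2]; rfl
  rcases cs'.move_adj (QQ ht cs' rs k).1 (QQ ht cs' rs k).2 i with hadj | heq
  · exact guard_of_adj (by rw [hcop]; exact hadj)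
  · rw [heq, hcop]
    exact guard_of_not_adj (G.irrefl)

theorem proj_play (k : ℕ) :
    (PP ht cs' rs k).1 = (QQ ht cs' rs k).1.map projC ∧
      (PP ht cs' rs k).2 = projC (QQ ht cs' rs k).2 := by
  induction k with
  | zero => exact ⟨rfl, rfl⟩
  | succ k ih =>
      obtain ⟨ih1, ih2⟩ := ih
      have hmv := pull_move_eq ht cs' rs k ih1 ih2
      have hcop : (pullCop ht cs').move (PP ht cs' rs k).1 (PP ht cs' rs k).2 =
          fun i => (cs'.move (QQ ht cs' rs k).1 (QQ ht cs' rs k).2 i).1 := funext hmv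
      constructor
      · show (PP ht cs' rs k).1 ++ [(PP ht cs' rs k).2] =
          ((QQ ht cs' rs k).1 ++ [(QQ ht cs' rs k).2]).map projC
        rw [List.map_append, List.map_singleton, ih1, ih2]
      · -- configurations
        have hsnd : (PP ht cs' rs k).2.2 = ((QQ ht cs' rs k).2.2).1 := by rw [ih2]; rfl
        have hcfg : projC (cs'.move (QQ ht cs' rs k).1 (QQ ht cs' rs k).2,
              (QQ ht cs' rs k).2.2) =
            ((pullCop ht cs').move (PP ht cs' rs k).1 (PP ht cs' rs k).2,
              (PP ht cs' rs k).2.2) := by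
          refine Prod.ext ?_ hsnd.symm
          exact funext fun i => (hmv i).symm
        have hQrob : (QQ ht cs' rs (k+1)).2.2 =
            guard (blowup G t) ((QQ ht cs' rs k).2.2)
              (rs.move (PP ht cs' rs k).1
                ((pullCop ht cs').move (PP ht cs' rs k).1 (PP ht cs' rs k).2,
                  (PP ht cs' rs k).2.2), ⟨0, ht⟩) := by
          show (liftRobber ht G n rs).move (QQ ht cs' rs k).1
              (cs'.move (QQ ht cs' rs k).1 (QQ ht cs' rs k).2, (QQ ht cs' rs k).2.2) = _
          unfold liftRobber
          dsimp only
          rw [← ih1, hcfg]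
        set m := rs.move (PP ht cs' rs k).1
            ((pullCop ht cs').move (PP ht cs' rs k).1 (PP ht cs' rs k).2,
              (PP ht cs' rs k).2.2) with hm
        have hrob : m = ((QQ ht cs' rs (k+1)).2.2).1 := by
          rcases rs.move_adj (PP ht cs' rs k).1
              ((pullCop ht cs').move (PP ht cs' rs k).1 (PP ht cs' rs k).2,
                (PP ht cs' rs k).2.2) with hadj | heq
          · have hb : (blowup G t).Adj ((QQ ht cs' rs k).2.2) (m, ⟨0, ht⟩) := by
              rw [blowup_adj]
              show G.Adj ((QQ ht cs' rs k).2.2).1 m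
              rw [← hsnd]
              exact hadj
            rw [hQrob, guard_of_adj hb]
          · have heq' : m = (PP ht cs' rs k).2.2 := heq
            have hb : ¬ (blowup G t).Adj ((QQ ht cs' rs k).2.2) (m, ⟨0, ht⟩) := by
              rw [blowup_adj]
              show ¬ G.Adj ((QQ ht cs' rs k).2.2).1 m
              rw [← hsnd, heq']
              exact G.irrefl
            rw [hQrob, guard_of_not_adj hb, ← hsnd, heq']
        show ((pullCop ht cs').move (PP ht cs' rs k).1 (PP ht cs' rs k).2, m) =
            projC (QQ ht cs' rs (k+1)).2
        refine Prod.ext ?_ ?_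
        · show (pullCop ht cs').move (PP ht cs' rs k).1 (PP ht cs' rs k).2 =
            fun i => (((QQ ht cs' rs (k+1)).2).1 i).1
          rw [hcop]
          rfl
        · exact hrob

theorem pull_win (ht : 0 < t) :
    PassiveCopsWin (blowup G t) n → PassiveCopsWin G n := by
  rintro ⟨cs', hw⟩
  refine ⟨pullCop ht cs', fun rs => ?_⟩
  obtain ⟨T, hcap⟩ := hw (liftRobber ht G n rs)
  obtain ⟨pm1, pm2⟩ := proj_play ht cs' rs T
  refine ⟨T, ?_⟩
  rcases hcap with ⟨i, hi⟩ | ⟨i, hi⟩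
  · left
    refine ⟨i, ?_⟩
    show (PP ht cs' rs T).2.1 i = (PP ht cs' rs T).2.2
    rw [pm2]
    exact congrArg Prod.fst hi
  · right
    refine ⟨i, ?_⟩
    show (pullCop ht cs').move (PP ht cs' rs T).1 (PP ht cs' rs T).2 i = (PP ht cs' rs T).2.2
    rw [pull_move_eq ht cs' rs T pm1 pm2 i,
      show cs'.move (QQ ht cs' rs T).1 (QQ ht cs' rs T).2 i = (QQ ht cs' rs T).2.2 from hi, pm2]
    rfl

end Pull


section Lift

variable {G : SimpleGraph V} {t n : ℕ}

theorem exists_adj (hconn : G.Connected) (hnt : Nontrivial V) (x : V) : ∃ y, G.Adj x y := by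
  obtain ⟨y, hy⟩ := exists_ne x
  have hd : 0 < G.dist x y := hconn.pos_dist_of_ne (Ne.symm hy)
  obtain ⟨w, hw⟩ := hconn.exists_walk_length_eq_dist x y
  cases w with
  | nil => rw [SimpleGraph.Walk.length_nil] at hw; omega
  | cons h p => exact ⟨_, h⟩

theorem exists_closer (hconn : G.Connected) {z x : V} (hzx : z ≠ x) :
    ∃ y, G.Adj z y ∧ G.dist y x < G.dist z x := by
  have hd : 0 < G.dist z x := hconn.pos_dist_of_ne hzx
  obtain ⟨w, hw⟩ := hconn.exists_walk_length_eq_dist z x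
  cases w with
  | nil => rw [SimpleGraph.Walk.length_nil] at hw; omega
  | cons h p =>
      refine ⟨_, h, ?_⟩
      have hle := SimpleGraph.dist_le p
      rw [SimpleGraph.Walk.length_cons] at hw
      omega

/-- Some recorded configuration witnesses a cop sharing the robber's class. -/
def shadowIn {t n : ℕ} (l : List (CRConfig (V × Fin t) n)) : Prop :=
  ∃ cf ∈ l, ∃ i, (cf.1 i).1 = cf.2.1

/-- The set of cops in the robber's class. -/
noncomputable def shSet {t n : ℕ} (c : CRConfig (V × Fin t) n) : Finset (Fin n) :=
  Finset.univ.filter fun j => (c.1 j).1 = c.2.1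

theorem mem_shSet {t n : ℕ} {c : CRConfig (V × Fin t) n} {j : Fin n} :
    j ∈ shSet c ↔ (c.1 j).1 = c.2.1 := by simp [shSet]

/-- The designated runner: a cop distinct from the least shadowing cop. -/
noncomputable def runOf {n : ℕ} (hn : 2 ≤ n) {t : ℕ} (c : CRConfig (V × Fin t) n)
    (h2 : (shSet c).Nonempty) : Fin n :=
  if (shSet c).min' h2 = (⟨0, by omega⟩ : Fin n) then ⟨1, by omega⟩ else ⟨0, by omega⟩

theorem runOf_ne {n : ℕ} (hn : 2 ≤ n) {t : ℕ} (c : CRConfig (V × Fin t) n)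
    (h2 : (shSet c).Nonempty) : runOf hn c h2 ≠ (shSet c).min' h2 := by
  unfold runOf
  split_ifs with h
  · rw [h]; simp [Fin.ext_iff]
  · exact fun hc => h hc.symm

theorem runOf_congr {n : ℕ} (hn : 2 ≤ n) {t : ℕ} {c c' : CRConfig (V × Fin t) n}
    (h2 : (shSet c).Nonempty) (h2' : (shSet c').Nonempty)
    (h : (shSet c).min' h2 = (shSet c').min' h2') : runOf hn c h2 = runOf hn c' h2' := by
  unfold runOf; rw [h]

/-- The phase-2 (shadowing) move. -/
noncomputable def p2move (G : SimpleGraph V) {n : ℕ} (hn : 2 ≤ n) {t : ℕ} (ht : 0 < t)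
    (c : CRConfig (V × Fin t) n) (i : Fin n) : V × Fin t :=
  if h1 : ∃ j, (blowup G t).Adj (c.1 j) c.2 then
    (if i = h1.choose then c.2 else c.1 i)
  else if h2 : (shSet c).Nonempty then
    (if i = runOf hn c h2 then
      (if hz : ∃ y, G.Adj (c.1 i).1 y ∧
          ((c.1 i).1 = c.2.1 ∨ G.dist y c.2.1 < G.dist (c.1 i).1 c.2.1)
       then (hz.choose, ⟨0, ht⟩) else c.1 i)
     else c.1 i)
  else c.1 i

/-- The blowup cop strategy obtained from a base-graph cop strategy. -/
noncomputable def liftCop (G : SimpleGraph V) {n : ℕ} (hn : 2 ≤ n) {t : ℕ} (ht : 0 < t)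
    (cs : PassiveCopStrategy G n) : PassiveCopStrategy (blowup G t) n where
  init i := (cs.init i, ⟨0, ht⟩)
  move h c i :=
    guard (blowup G t) (c.1 i)
      (if shadowIn (h ++ [c]) then p2move G hn ht c i
       else (if cs.move (h.map projC) (projC c) i = c.2.1 then c.2
             else (cs.move (h.map projC) (projC c) i, ⟨0, ht⟩)))
  move_adj h c i := guard_adj _ _ _

variable (hn : 2 ≤ n) (ht : 0 < t) (cs : PassiveCopStrategy G n)
  (rs' : PassiveRobberStrategy (blowup G t) n)

/-- The blowup play of the lifted strategy against `rs'`. -/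
noncomputable def Q2 (k : ℕ) : List (CRConfig (V × Fin t) n) × CRConfig (V × Fin t) n :=
  crPlay n (liftCop G hn ht cs).init rs'.init (liftCop G hn ht cs).move rs'.move k

/-- Some cop shares the robber's class at time `k`. -/
def trig (k : ℕ) : Prop :=
  ∃ i, ((Q2 hn ht cs rs' k).2.1 i).1 = ((Q2 hn ht cs rs' k).2.2).1

theorem Q2_hist (k : ℕ) :
    (Q2 hn ht cs rs' k).1 = (List.range k).map (fun m => (Q2 hn ht cs rs' m).2) :=
  crPlay_hist _ _ _ _ k

theorem shadow_iff (k : ℕ) :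
    shadowIn ((Q2 hn ht cs rs' k).1 ++ [(Q2 hn ht cs rs' k).2]) ↔
      ∃ m ≤ k, trig hn ht cs rs' m := by
  constructor
  · rintro ⟨cf, hmem, i, hi⟩
    rw [List.mem_append] at hmem
    rcases hmem with hmem | hmem
    · rw [Q2_hist] at hmem
      obtain ⟨m, hm, rfl⟩ := List.mem_map.1 hmem
      exact ⟨m, le_of_lt (List.mem_range.1 hm), i, hi⟩
    · rw [List.mem_singleton] at hmem
      subst hmem
      exact ⟨k, le_rfl, i, hi⟩
  · rintro ⟨m, hm, i, hi⟩
    refine ⟨(Q2 hn ht cs rs' m).2, ?_, i, hi⟩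
    rw [List.mem_append]
    rcases lt_or_eq_of_le hm with h | h
    · left; rw [Q2_hist]; exact List.mem_map.2 ⟨m, List.mem_range.2 h, rfl⟩
    · right; subst h; exact List.mem_singleton.2 rfl

theorem move_p2 (k : ℕ) (hsh : shadowIn ((Q2 hn ht cs rs' k).1 ++ [(Q2 hn ht cs rs' k).2]))
    (i : Fin n) :
    (liftCop G hn ht cs).move (Q2 hn ht cs rs' k).1 (Q2 hn ht cs rs' k).2 i =
      guard (blowup G t) ((Q2 hn ht cs rs' k).2.1 i) (p2move G hn ht (Q2 hn ht cs rs' k).2 i) := by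
  show guard _ _ _ = _
  rw [if_pos hsh]

theorem phase2_false (τ : ℕ) (hτ : trig hn ht cs rs' τ) (hconn : G.Connected)
    (hnt : Nontrivial V)
    (hno : ¬ crCaptures n (liftCop G hn ht cs).init rs'.init
      (liftCop G hn ht cs).move rs'.move) : False := by
  have hno2 : ∀ k i, (liftCop G hn ht cs).move (Q2 hn ht cs rs' k).1 (Q2 hn ht cs rs' k).2 i ≠
      (Q2 hn ht cs rs' k).2.2 := fun k i h => hno ⟨k, Or.inr ⟨i, h⟩⟩
  have hcond : ∀ k, τ ≤ k →
      shadowIn ((Q2 hn ht cs rs' k).1 ++ [(Q2 hn ht cs rs' k).2]) :=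
    fun k hk => (shadow_iff hn ht cs rs' k).2 ⟨τ, hk, hτ⟩
  -- no cop is ever adjacent to the robber (else immediate capture)
  have F1 : ∀ k, τ ≤ k →
      ¬ ∃ j, (blowup G t).Adj ((Q2 hn ht cs rs' k).2.1 j) ((Q2 hn ht cs rs' k).2.2) := by
    intro k hk hex
    apply hno2 k hex.choose
    rw [move_p2 hn ht cs rs' k (hcond k hk)]
    unfold p2move
    rw [dif_pos hex, if_pos rfl]
    exact guard_of_adj hex.choose_spec
  -- cops other than the runner stay put
  have hstayGen : ∀ k, τ ≤ k → ∀ (ihs : (shSet (Q2 hn ht cs rs' k).2).Nonempty),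
      ∀ i, i ≠ runOf hn (Q2 hn ht cs rs' k).2 ihs →
        (Q2 hn ht cs rs' (k+1)).2.1 i = (Q2 hn ht cs rs' k).2.1 i := by
    intro k hk ihs i hi
    show (liftCop G hn ht cs).move (Q2 hn ht cs rs' k).1 (Q2 hn ht cs rs' k).2 i = _
    rw [move_p2 hn ht cs rs' k (hcond k hk)]
    unfold p2move
    rw [dif_neg (F1 k hk), dif_pos ihs, if_neg hi]
    exact guard_of_not_adj ((blowup G t).irrefl)
  -- the robber is frozen and the shadow persists
  have F2 : ∀ k, τ ≤ k → (Q2 hn ht cs rs' k).2.2 = (Q2 hn ht cs rs' τ).2.2 ∧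
      (shSet (Q2 hn ht cs rs' k).2).Nonempty := by
    refine Nat.le_induction ⟨rfl, ?_⟩ ?_
    · obtain ⟨i, hi⟩ := hτ
      exact ⟨i, mem_shSet.2 hi⟩
    · rintro k hk ⟨ihr, ihs⟩
      have hlmem : (shSet (Q2 hn ht cs rs' k).2).min' ihs ∈ shSet (Q2 hn ht cs rs' k).2 :=
        Finset.min'_mem _ _
      have hlx : ((Q2 hn ht cs rs' k).2.1 ((shSet (Q2 hn ht cs rs' k).2).min' ihs)).1 =
          ((Q2 hn ht cs rs' k).2.2).1 := mem_shSet.1 hlmem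
      have hlr : (shSet (Q2 hn ht cs rs' k).2).min' ihs ≠ runOf hn (Q2 hn ht cs rs' k).2 ihs :=
        (runOf_ne hn _ ihs).symm
      have hleadstay := hstayGen k hk ihs _ hlr
      rcases rs'.move_adj (Q2 hn ht cs rs' k).1
          ((liftCop G hn ht cs).move (Q2 hn ht cs rs' k).1 (Q2 hn ht cs rs' k).2,
            (Q2 hn ht cs rs' k).2.2) with hA | hE
      · exfalso
        apply F1 (k+1) (le_trans hk (Nat.le_succ k))
        refine ⟨(shSet (Q2 hn ht cs rs' k).2).min' ihs, ?_⟩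
        show G.Adj ((Q2 hn ht cs rs' (k+1)).2.1 ((shSet (Q2 hn ht cs rs' k).2).min' ihs)).1
          ((Q2 hn ht cs rs' (k+1)).2.2).1
        rw [hleadstay, hlx]
        exact hA
      · have hE' : (Q2 hn ht cs rs' (k+1)).2.2 = (Q2 hn ht cs rs' k).2.2 := hE
        refine ⟨by rw [hE', ihr], ⟨(shSet (Q2 hn ht cs rs' k).2).min' ihs, mem_shSet.2 ?_⟩⟩
        show ((Q2 hn ht cs rs' (k+1)).2.1 ((shSet (Q2 hn ht cs rs' k).2).min' ihs)).1 =
          ((Q2 hn ht cs rs' (k+1)).2.2).1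
        rw [hleadstay, hE', hlx]
  -- the runner's move
  have F_run : ∀ k (hk : τ ≤ k), ∃ y,
      G.Adj ((Q2 hn ht cs rs' k).2.1 (runOf hn (Q2 hn ht cs rs' k).2 (F2 k hk).2)).1 y ∧
      y ≠ ((Q2 hn ht cs rs' k).2.2).1 ∧
      (((Q2 hn ht cs rs' k).2.1 (runOf hn (Q2 hn ht cs rs' k).2 (F2 k hk).2)).1 =
          ((Q2 hn ht cs rs' k).2.2).1 ∨
        G.dist y ((Q2 hn ht cs rs' k).2.2).1 <
          G.dist ((Q2 hn ht cs rs' k).2.1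
            (runOf hn (Q2 hn ht cs rs' k).2 (F2 k hk).2)).1 ((Q2 hn ht cs rs' k).2.2).1) ∧
      (Q2 hn ht cs rs' (k+1)).2.1 (runOf hn (Q2 hn ht cs rs' k).2 (F2 k hk).2) =
        (y, ⟨0, ht⟩) := by
    intro k hk
    have hnadj : ¬ G.Adj ((Q2 hn ht cs rs' k).2.1
        (runOf hn (Q2 hn ht cs rs' k).2 (F2 k hk).2)).1 ((Q2 hn ht cs rs' k).2.2).1 :=
      fun hadj => F1 k hk ⟨runOf hn (Q2 hn ht cs rs' k).2 (F2 k hk).2, hadj⟩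
    have hz : ∃ y, G.Adj ((Q2 hn ht cs rs' k).2.1
        (runOf hn (Q2 hn ht cs rs' k).2 (F2 k hk).2)).1 y ∧
        (((Q2 hn ht cs rs' k).2.1 (runOf hn (Q2 hn ht cs rs' k).2 (F2 k hk).2)).1 =
            ((Q2 hn ht cs rs' k).2.2).1 ∨
          G.dist y ((Q2 hn ht cs rs' k).2.2).1 <
            G.dist ((Q2 hn ht cs rs' k).2.1
              (runOf hn (Q2 hn ht cs rs' k).2 (F2 k hk).2)).1 ((Q2 hn ht cs rs' k).2.2).1) := by
      by_cases hzx : ((Q2 hn ht cs rs' k).2.1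
          (runOf hn (Q2 hn ht cs rs' k).2 (F2 k hk).2)).1 = ((Q2 hn ht cs rs' k).2.2).1
      · obtain ⟨y, hy⟩ := exists_adj hconn hnt ((Q2 hn ht cs rs' k).2.1
          (runOf hn (Q2 hn ht cs rs' k).2 (F2 k hk).2)).1
        exact ⟨y, hy, Or.inl hzx⟩
      · obtain ⟨y, hy1, hy2⟩ := exists_closer hconn hzx
        exact ⟨y, hy1, Or.inr hy2⟩
    have hmove : (Q2 hn ht cs rs' (k+1)).2.1
        (runOf hn (Q2 hn ht cs rs' k).2 (F2 k hk).2) = (hz.choose, ⟨0, ht⟩) := by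
      show (liftCop G hn ht cs).move (Q2 hn ht cs rs' k).1 (Q2 hn ht cs rs' k).2 _ = _
      rw [move_p2 hn ht cs rs' k (hcond k hk)]
      unfold p2move
      rw [dif_neg (F1 k hk), dif_pos (F2 k hk).2, if_pos rfl, dif_pos hz]
      exact guard_of_adj hz.choose_spec.1
    refine ⟨hz.choose, hz.choose_spec.1, ?_, hz.choose_spec.2, hmove⟩
    intro hyx
    exact hnadj (hyx ▸ hz.choose_spec.1)
  -- the shadow set shrinks; the runner is constant
  have F3 : ∀ k (hk : τ ≤ k),
      (shSet (Q2 hn ht cs rs' (k+1)).2).min' (F2 (k+1) (le_trans hk (Nat.le_succ k))).2 =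
        (shSet (Q2 hn ht cs rs' k).2).min' (F2 k hk).2 := by
    intro k hk
    obtain ⟨y, hyadj, hyne, hdisj, hymove⟩ := F_run k hk
    have hrfrozen : (Q2 hn ht cs rs' (k+1)).2.2 = (Q2 hn ht cs rs' k).2.2 := by
      rw [(F2 (k+1) (le_trans hk (Nat.le_succ k))).1, (F2 k hk).1]
    have hsub : shSet (Q2 hn ht cs rs' (k+1)).2 ⊆ shSet (Q2 hn ht cs rs' k).2 := by
      intro j hj
      have hx' := mem_shSet.1 hj
      by_cases hjr : j = runOf hn (Q2 hn ht cs rs' k).2 (F2 k hk).2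
      · exfalso
        apply hyne
        subst hjr
        rw [hymove] at hx'
        rw [← hrfrozen, ← hx']
      · rw [mem_shSet, ← hstayGen k hk (F2 k hk).2 j hjr, ← hrfrozen]
        exact hx'
    have hlr : (shSet (Q2 hn ht cs rs' k).2).min' (F2 k hk).2 ≠
        runOf hn (Q2 hn ht cs rs' k).2 (F2 k hk).2 := (runOf_ne hn _ _).symm
    have hlead_mem' : (shSet (Q2 hn ht cs rs' k).2).min' (F2 k hk).2 ∈
        shSet (Q2 hn ht cs rs' (k+1)).2 := by
      rw [mem_shSet, hstayGen k hk (F2 k hk).2 _ hlr, hrfrozen]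
      exact mem_shSet.1 (Finset.min'_mem _ _)
    exact le_antisymm (Finset.min'_le _ _ hlead_mem')
      (Finset.min'_le _ _ (hsub (Finset.min'_mem _ _)))
  have hρ : ∀ k (hk : τ ≤ k),
      runOf hn (Q2 hn ht cs rs' k).2 (F2 k hk).2 =
        runOf hn (Q2 hn ht cs rs' τ).2 (F2 τ le_rfl).2 := by
    refine Nat.le_induction rfl ?_
    intro k hk ih
    rw [runOf_congr hn _ _ (F3 k hk)]
    exact ih
  -- infinite descent on the runner's distance to the robber's class
  have hfr : ∀ j (hj : τ ≤ j), ((Q2 hn ht cs rs' j).2.2).1 = ((Q2 hn ht cs rs' τ).2.2).1 :=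
    fun j hj => by rw [(F2 j hj).1]
  have hdec : ∀ m (hm : τ ≤ m),
      G.dist ((Q2 hn ht cs rs' (m+1+1)).2.1
          (runOf hn (Q2 hn ht cs rs' τ).2 (F2 τ le_rfl).2)).1 ((Q2 hn ht cs rs' τ).2.2).1 <
        G.dist ((Q2 hn ht cs rs' (m+1)).2.1
          (runOf hn (Q2 hn ht cs rs' τ).2 (F2 τ le_rfl).2)).1 ((Q2 hn ht cs rs' τ).2.2).1 := by
    intro m hm
    have hk' : τ ≤ m + 1 := le_trans hm (Nat.le_succ m)
    obtain ⟨y, hyadj, hyne, hdisj, hymove⟩ := F_run (m+1) hk'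
    obtain ⟨y', hy'adj, hy'ne, hdisj', hy'move⟩ := F_run m hm
    rw [hρ (m+1) hk'] at hymove hdisj
    rw [hρ m hm] at hy'move
    rcases hdisj with hzx | hlt
    · exfalso
      apply hy'ne
      have h1 : ((Q2 hn ht cs rs' (m+1)).2.1
          (runOf hn (Q2 hn ht cs rs' τ).2 (F2 τ le_rfl).2)).1 = y' := by rw [hy'move]
      rw [← h1, hzx, hfr (m+1) hk', ← hfr m hm]
    · rw [hymove, hy'move]
      rw [hfr (m+1) hk'] at hlt
      rw [hy'move] at hlt
      exact hlt
  have hmono : ∀ m,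
      G.dist ((Q2 hn ht cs rs' (τ+1+m)).2.1
          (runOf hn (Q2 hn ht cs rs' τ).2 (F2 τ le_rfl).2)).1 ((Q2 hn ht cs rs' τ).2.2).1 + m ≤
        G.dist ((Q2 hn ht cs rs' (τ+1)).2.1
          (runOf hn (Q2 hn ht cs rs' τ).2 (F2 τ le_rfl).2)).1 ((Q2 hn ht cs rs' τ).2.2).1 := by
    intro m
    induction m with
    | zero => simp
    | succ m ih =>
        have h1 : τ + (m+1) = τ + m + 1 := by omega
        have h2 : τ + 1 + (m + 1) = (τ + m) + 1 + 1 := by omega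
        have h3 : τ + 1 + m = (τ + m) + 1 := by omega
        have hd := hdec (τ + m) (Nat.le_add_right τ m)
        rw [h2]
        rw [h3] at ih
        omega
  have hfin := hmono (G.dist ((Q2 hn ht cs rs' (τ+1)).2.1
      (runOf hn (Q2 hn ht cs rs' τ).2 (F2 τ le_rfl).2)).1 ((Q2 hn ht cs rs' τ).2.2).1 + 1)
  omega

/-- The base-graph robber strategy extracted from `rs'` by simulating the blowup play. -/
noncomputable def pullRob : PassiveRobberStrategy G n where
  init _ := ((Q2 hn ht cs rs' 0).2.2).1
  move h c := guard G c.2 (((Q2 hn ht cs rs' (h.length + 1)).2.2).1)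
  move_adj h c := guard_adj _ _ _

/-- The base-graph play against the extracted robber. -/
noncomputable def P2 (k : ℕ) : List (CRConfig V n) × CRConfig V n :=
  crPlay n cs.init (pullRob hn ht cs rs').init cs.move (pullRob hn ht cs rs').move k

theorem lift_move_eq (k : ℕ)
    (hns : ¬ shadowIn ((Q2 hn ht cs rs' k).1 ++ [(Q2 hn ht cs rs' k).2]))
    (ih1 : (P2 hn ht cs rs' k).1 = (Q2 hn ht cs rs' k).1.map projC)
    (ih2 : (P2 hn ht cs rs' k).2 = projC (Q2 hn ht cs rs' k).2) (i : Fin n) :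
    (liftCop G hn ht cs).move (Q2 hn ht cs rs' k).1 (Q2 hn ht cs rs' k).2 i =
      guard (blowup G t) ((Q2 hn ht cs rs' k).2.1 i)
        (if cs.move (P2 hn ht cs rs' k).1 (P2 hn ht cs rs' k).2 i =
            ((Q2 hn ht cs rs' k).2.2).1 then (Q2 hn ht cs rs' k).2.2
         else (cs.move (P2 hn ht cs rs' k).1 (P2 hn ht cs rs' k).2 i, ⟨0, ht⟩)) := by
  show guard _ _ _ = _
  rw [if_neg hns, ih1, ih2]

theorem lift_proj_move (k : ℕ)
    (hns : ¬ shadowIn ((Q2 hn ht cs rs' k).1 ++ [(Q2 hn ht cs rs' k).2]))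
    (htrig : ¬ trig hn ht cs rs' k)
    (ih1 : (P2 hn ht cs rs' k).1 = (Q2 hn ht cs rs' k).1.map projC)
    (ih2 : (P2 hn ht cs rs' k).2 = projC (Q2 hn ht cs rs' k).2) (i : Fin n) :
    ((liftCop G hn ht cs).move (Q2 hn ht cs rs' k).1 (Q2 hn ht cs rs' k).2 i).1 =
      cs.move (P2 hn ht cs rs' k).1 (P2 hn ht cs rs' k).2 i := by
  have hpc : (P2 hn ht cs rs' k).2.1 i = ((Q2 hn ht cs rs' k).2.1 i).1 := by rw [ih2]; rfl
  rw [lift_move_eq hn ht cs rs' k hns ih1 ih2 i]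
  rcases cs.move_adj (P2 hn ht cs rs' k).1 (P2 hn ht cs rs' k).2 i with hadj | heq
  · by_cases hgr : cs.move (P2 hn ht cs rs' k).1 (P2 hn ht cs rs' k).2 i =
        ((Q2 hn ht cs rs' k).2.2).1
    · rw [if_pos hgr, guard_of_adj (show (blowup G t).Adj _ _ from ?_)]
      · exact hgr.symm
      · show G.Adj ((Q2 hn ht cs rs' k).2.1 i).1 ((Q2 hn ht cs rs' k).2.2).1
        rw [← hpc, ← hgr]
        exact hadj
    · rw [if_neg hgr, guard_of_adj (show (blowup G t).Adj _ _ from ?_)]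
      · show G.Adj ((Q2 hn ht cs rs' k).2.1 i).1
          (cs.move (P2 hn ht cs rs' k).1 (P2 hn ht cs rs' k).2 i)
        rw [← hpc]
        exact hadj
  · have hg : cs.move (P2 hn ht cs rs' k).1 (P2 hn ht cs rs' k).2 i =
        ((Q2 hn ht cs rs' k).2.1 i).1 := by rw [heq, hpc]
    by_cases hgr : cs.move (P2 hn ht cs rs' k).1 (P2 hn ht cs rs' k).2 i =
        ((Q2 hn ht cs rs' k).2.2).1
    · exact absurd ⟨i, hg.symm.trans hgr⟩ htrig
    · rw [if_neg hgr, guard_of_not_adj (show ¬ (blowup G t).Adj _ _ from ?_)]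
      · exact hg.symm
      · show ¬ G.Adj ((Q2 hn ht cs rs' k).2.1 i).1
          (cs.move (P2 hn ht cs rs' k).1 (P2 hn ht cs rs' k).2 i)
        rw [hg]
        exact G.irrefl


theorem proj2 (htr : ∀ m, ¬ trig hn ht cs rs' m) (k : ℕ) :
    (P2 hn ht cs rs' k).1 = (Q2 hn ht cs rs' k).1.map projC ∧
      (P2 hn ht cs rs' k).2 = projC (Q2 hn ht cs rs' k).2 := by
  induction k with
  | zero => exact ⟨rfl, rfl⟩
  | succ k ih =>
      obtain ⟨ih1, ih2⟩ := ih
      have hns : ¬ shadowIn ((Q2 hn ht cs rs' k).1 ++ [(Q2 hn ht cs rs' k).2]) := by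
        rw [shadow_iff]
        rintro ⟨m, _, hm⟩
        exact htr m hm
      have hmv := lift_proj_move hn ht cs rs' k hns (htr k) ih1 ih2
      have hcop : (fun i => (((liftCop G hn ht cs).move (Q2 hn ht cs rs' k).1
            (Q2 hn ht cs rs' k).2 i)).1) =
          cs.move (P2 hn ht cs rs' k).1 (P2 hn ht cs rs' k).2 := funext hmv
      refine ⟨?_, ?_⟩
      · show (P2 hn ht cs rs' k).1 ++ [(P2 hn ht cs rs' k).2] =
          ((Q2 hn ht cs rs' k).1 ++ [(Q2 hn ht cs rs' k).2]).map projC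
        rw [List.map_append, List.map_singleton, ih1, ih2]
      · have hlen : (P2 hn ht cs rs' k).1.length = k := crPlay_len _ _ _ _ k
        have hPmove : (P2 hn ht cs rs' (k+1)).2.2 =
            guard G ((P2 hn ht cs rs' k).2.2) (((Q2 hn ht cs rs' (k+1)).2.2).1) := by
          show (pullRob hn ht cs rs').move (P2 hn ht cs rs' k).1
            (cs.move (P2 hn ht cs rs' k).1 (P2 hn ht cs rs' k).2, (P2 hn ht cs rs' k).2.2) = _
          unfold pullRob
          dsimp only
          rw [hlen]
        have hsnd : (P2 hn ht cs rs' k).2.2 = ((Q2 hn ht cs rs' k).2.2).1 := by rw [ih2]; rfl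
        have hrob : (P2 hn ht cs rs' (k+1)).2.2 = ((Q2 hn ht cs rs' (k+1)).2.2).1 := by
          rcases rs'.move_adj (Q2 hn ht cs rs' k).1
              ((liftCop G hn ht cs).move (Q2 hn ht cs rs' k).1 (Q2 hn ht cs rs' k).2,
                (Q2 hn ht cs rs' k).2.2) with hA | hE
          · have hadj : G.Adj ((P2 hn ht cs rs' k).2.2) (((Q2 hn ht cs rs' (k+1)).2.2).1) := by
              rw [hsnd]
              exact hA
            rw [hPmove, guard_of_adj hadj]
          · have hE' : (Q2 hn ht cs rs' (k+1)).2.2 = (Q2 hn ht cs rs' k).2.2 := hE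
            have hnadj : ¬ G.Adj ((P2 hn ht cs rs' k).2.2)
                (((Q2 hn ht cs rs' (k+1)).2.2).1) := by
              rw [hsnd, hE']
              exact G.irrefl
            rw [hPmove, guard_of_not_adj hnadj, hE', hsnd]
        show (cs.move (P2 hn ht cs rs' k).1 (P2 hn ht cs rs' k).2,
            (P2 hn ht cs rs' (k+1)).2.2) = projC (Q2 hn ht cs rs' (k+1)).2
        refine Prod.ext ?_ hrob
        show cs.move (P2 hn ht cs rs' k).1 (P2 hn ht cs rs' k).2 =
          fun i => (((Q2 hn ht cs rs' (k+1)).2).1 i).1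
        rw [← hcop]
        rfl

theorem lift_win (hconn : G.Connected) (hnt : Nontrivial V) (hn : 2 ≤ n) (ht : 0 < t)
    (hwin : PassiveCopsWin G n) : PassiveCopsWin (blowup G t) n := by
  obtain ⟨cs, hcs⟩ := hwin
  refine ⟨liftCop G hn ht cs, fun rs' => ?_⟩
  by_cases htr : ∃ m, trig hn ht cs rs' m
  · by_contra hno
    obtain ⟨τ, hτ⟩ := htr
    exact phase2_false hn ht cs rs' τ hτ hconn hnt hno
  · push_neg at htr
    obtain ⟨T, hcap⟩ := hcs (pullRob hn ht cs rs')
    obtain ⟨pm1, pm2⟩ := proj2 hn ht cs rs' htr T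
    rcases hcap with ⟨i, hi⟩ | ⟨i, hi⟩
    · exfalso
      apply htr T
      refine ⟨i, ?_⟩
      have hi' : (P2 hn ht cs rs' T).2.1 i = (P2 hn ht cs rs' T).2.2 := hi
      rw [pm2] at hi'
      exact hi'
    · refine ⟨T, Or.inr ⟨i, ?_⟩⟩
      show (liftCop G hn ht cs).move (Q2 hn ht cs rs' T).1 (Q2 hn ht cs rs' T).2 i =
        (Q2 hn ht cs rs' T).2.2
      have hns : ¬ shadowIn ((Q2 hn ht cs rs' T).1 ++ [(Q2 hn ht cs rs' T).2]) := by
        rw [shadow_iff]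
        rintro ⟨m, _, hm⟩
        exact htr m hm
      rw [lift_move_eq hn ht cs rs' T hns pm1 pm2 i]
      have hi' : cs.move (P2 hn ht cs rs' T).1 (P2 hn ht cs rs' T).2 i =
          (P2 hn ht cs rs' T).2.2 := hi
      have hgr : cs.move (P2 hn ht cs rs' T).1 (P2 hn ht cs rs' T).2 i =
          ((Q2 hn ht cs rs' T).2.2).1 := by rw [hi', pm2]; rfl
      rw [if_pos hgr]
      apply guard_of_adj
      have hpc : (P2 hn ht cs rs' T).2.1 i = ((Q2 hn ht cs rs' T).2.1 i).1 := by rw [pm2]; rfl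
      rcases cs.move_adj (P2 hn ht cs rs' T).1 (P2 hn ht cs rs' T).2 i with hadj | heq
      · show G.Adj ((Q2 hn ht cs rs' T).2.1 i).1 ((Q2 hn ht cs rs' T).2.2).1
        rw [← hpc, ← hgr]
        exact hadj
      · exfalso
        apply htr T
        exact ⟨i, by rw [← hpc, ← heq, hgr]⟩

end Lift

theorem win_card [Fintype V] (G : SimpleGraph V) : PassiveCopsWin G (Fintype.card V) := by
  refine ⟨⟨fun i => (Fintype.equivFin V).symm i, fun _ c i => c.1 i,
    fun _ _ _ => Or.inr rfl⟩, fun rs => ?_⟩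
  refine ⟨0, Or.inl ⟨(Fintype.equivFin V)
    (rs.init fun i => (Fintype.equivFin V).symm i), ?_⟩⟩
  show (Fintype.equivFin V).symm ((Fintype.equivFin V) (rs.init _)) = rs.init _
  exact Equiv.symm_apply_apply _ _

theorem win_one (G : SimpleGraph V) (hne : Nonempty V) (hsub : Subsingleton V) :
    PassiveCopsWin G 1 := by
  refine ⟨⟨fun _ => Classical.choice hne, fun _ c i => c.1 i,
    fun _ _ _ => Or.inr rfl⟩, fun rs => ?_⟩
  exact ⟨0, Or.inl ⟨0, Subsingleton.elim _ _⟩⟩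

end CopsBlowupAux

/-- If `G` is a connected graph with `cop(G) ≥ 2`, then the `t`-blowup of `G`
has the same cop number as `G`, for every positive integer `t`. -/
theorem copNumber_blowup {V : Type u} [Fintype V] (G : SimpleGraph V)
    (hconn : G.Connected) (h2 : 2 ≤ copNumber G) (t : ℕ) (ht : 0 < t) :
    copNumber (blowup G t) = copNumber G := by
  classical
  have hnt : Nontrivial V := by
    by_contra hsub
    rw [not_nontrivial_iff_subsingleton] at hsub
    have h1 : copNumber G ≤ 1 :=
      Nat.sInf_le (CopsBlowupAux.win_one G hconn.nonempty hsub)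
    omega
  have hGne : {n | PassiveCopsWin G n}.Nonempty :=
    ⟨Fintype.card V, CopsBlowupAux.win_card G⟩
  have hmem : PassiveCopsWin G (copNumber G) := Nat.sInf_mem hGne
  have hB : PassiveCopsWin (blowup G t) (copNumber G) :=
    CopsBlowupAux.lift_win hconn hnt h2 ht hmem
  refine le_antisymm (Nat.sInf_le hB) ?_
  have hBne : {n | PassiveCopsWin (blowup G t) n}.Nonempty := ⟨_, hB⟩
  exact Nat.sInf_le (CopsBlowupAux.pull_win ht (Nat.sInf_mem hBne))
end
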